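/- arXiv:1901.06702 — 4 statements merged into one kernel-verified Lean document; each statement's English description precedes it below -/
import Mathlib

section
/- Let m ≥ 1, d ≥ 2, and N be an integer with N > m·2^{2m+4}·log(2^{m+3} d). Then there exists a point set P ⊆ M_m^d with #P ≤ N such that P intersects B_m(s,p) for every (s,p) ∈ I_m; consequently disp(P) ≤ 2^{-m}. -/
/-- The grid `M_m = {i/2^m : 1 ≤ i ≤ 2^m - 1} ⊆ (0,1)`. -/
def Mgrid (m : ℕ) : Set ℝ := {x | ∃ i : ℕ, 1 ≤ i ∧ i ≤ 2 ^ m - 1 ∧ x = (i : ℝ) / 2 ^ m}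

/-- `Ω_m(s,p)` is nonempty. -/
def OmegaNonempty (m d : ℕ) (s : Fin d → ℕ) (p : Fin d → ℝ) : Prop :=
  ∃ a b : Fin d → ℝ,
    (∀ ℓ, 0 ≤ a ℓ ∧ a ℓ ≤ b ℓ ∧ b ℓ ≤ 1) ∧
    ((2 : ℝ) ^ m)⁻¹ < ∏ ℓ, (b ℓ - a ℓ) ∧
    ∀ ℓ, (s ℓ : ℝ) / 2 ^ m < b ℓ - a ℓ ∧ b ℓ - a ℓ ≤ ((s ℓ : ℝ) + 1) / 2 ^ m ∧
      p ℓ - ((2 : ℝ) ^ m)⁻¹ ≤ a ℓ ∧ a ℓ < p ℓ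



open Finset

-- Bernoulli step up: for x ≥ k+1, x^(2k+1) ≤ (x-1)^k (x+1)^(k+1)
lemma bern_up (k : ℕ) (x : ℝ) (hx : (k:ℝ) + 1 ≤ x) :
    x^(2*k+1) ≤ (x-1)^k * (x+1)^(k+1) := by
  have hk0 : (0:ℝ) ≤ (k:ℝ) := Nat.cast_nonneg k
  have hx1 : (1:ℝ) ≤ x := by linarith
  have hx0 : (0:ℝ) < x := by linarith
  have hX : (0:ℝ) < x^2 := by positivity
  have hb : 1 + (k:ℝ) * (-(1/x^2)) ≤ (1 + (-(1/x^2)))^k := by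
    apply one_add_mul_le_pow
    have : (1:ℝ)/x^2 ≤ 1 := by rw [div_le_one hX]; nlinarith
    linarith
  have hpk : (x^2)^k = x^(2*k) := by rw [← pow_mul, mul_comm]
  have hpk1 : (x^2)^(k+1) = x^(2*k)*x^2 := by rw [pow_succ, hpk]
  have h3 : (1 + (-(1/x^2)))^k * (x^2)^k = (x^2-1)^k := by
    rw [← mul_pow]; congr 1; field_simp; ring
  have hb2 : x^(2*k)*x^2 - (k:ℝ) * x^(2*k) ≤ (x^2-1)^k * x^2 := by
    have h4 := mul_le_mul_of_nonneg_right hb (le_of_lt (pow_pos hX (k+1)))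
    calc x^(2*k)*x^2 - (k:ℝ)*x^(2*k)
        = (1 + (k:ℝ)*(-(1/x^2))) * (x^2)^(k+1) := by
          rw [hpk1]; field_simp; ring
      _ ≤ (1 + (-(1/x^2)))^k * (x^2)^(k+1) := h4
      _ = (x^2-1)^k * x^2 := by
          rw [show ((x:ℝ)^2)^(k+1) = (x^2)^k * x^2 from pow_succ _ k, ← mul_assoc, h3]
  have hxk : (k:ℝ)*x + k ≤ x^2 := by nlinarith
  have hu : (0:ℝ) ≤ x^(2*k) := by positivity
  have hsucc : x^(2*k+1) = x^(2*k)*x := pow_succ x (2*k)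
  have key : x^(2*k+1) * x^2 ≤ (x^2-1)^k * (x+1) * x^2 := by
    rw [hsucc]
    nlinarith [mul_le_mul_of_nonneg_right hb2 (by linarith : (0:ℝ) ≤ x + 1),
      mul_nonneg hu (by linarith : (0:ℝ) ≤ x^2 - (k:ℝ)*x - k)]
  have := le_of_mul_le_mul_right (by linarith [key] :
    x^(2*k+1) * x^2 ≤ ((x^2-1)^k * (x+1)) * x^2) hX
  calc x^(2*k+1) ≤ (x^2-1)^k * (x+1) := this
    _ = (x-1)^k * (x+1)^(k+1) := by
        rw [show x^2 - 1 = (x-1)*(x+1) by ring, mul_pow, pow_succ]; ring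

-- Bernoulli step down: for 2 ≤ x ≤ k, (x-1)^k (x+1)^(k+1) ≤ x^(2k+1)
lemma bern_down (k : ℕ) (x : ℝ) (h2 : 2 ≤ x) (hxk : x ≤ (k:ℝ)) :
    (x-1)^k * (x+1)^(k+1) ≤ x^(2*k+1) := by
  have hx0 : (0:ℝ) < x := by linarith
  have hy : (0:ℝ) < x^2 - 1 := by nlinarith
  have hb : 1 + (k:ℝ) * (1/(x^2-1)) ≤ (1 + 1/(x^2-1))^k := by
    apply one_add_mul_le_pow
    have : (0:ℝ) < 1/(x^2-1) := by positivity
    linarith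
  have h3 : (1 + 1/(x^2-1))^k * (x^2-1)^k = (x^2)^k := by
    rw [← mul_pow]; congr 1; field_simp; ring
  have hz : (0:ℝ) ≤ (x^2-1)^k := le_of_lt (pow_pos hy k)
  -- multiply hb by (x^2-1)^k * (x^2-1):
  have hb2 : (x^2-1)^k * (x^2 - 1 + k) ≤ (x^2)^k * (x^2-1) := by
    have h4 := mul_le_mul_of_nonneg_right hb (mul_nonneg hz hy.le)
    calc (x^2-1)^k * (x^2-1+k)
        = (1 + (k:ℝ)*(1/(x^2-1))) * ((x^2-1)^k * (x^2-1)) := by field_simp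
      _ ≤ (1 + 1/(x^2-1))^k * ((x^2-1)^k * (x^2-1)) := h4
      _ = (x^2)^k * (x^2-1) := by rw [← mul_assoc, h3]
  have hpk : (x^2)^k = x^(2*k) := by rw [← pow_mul, mul_comm]
  have hsucc : x^(2*k+1) = x^(2*k)*x := pow_succ x (2*k)
  have hpos : (0:ℝ) < x^2 - 1 + k := by positivity
  have key : (x^2-1)^k * (x+1) * (x^2-1+k) ≤ x^(2*k+1) * (x^2-1+k) := by
    rw [hsucc, ← hpk]
    -- (x²-1)(x+1) ≤ x(x²-1+k)  since x²-1 ≤ kx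
    have hq : (x^2-1)*(x+1) ≤ x*(x^2-1+k) := by nlinarith
    nlinarith [mul_le_mul_of_nonneg_right hb2 (by linarith : (0:ℝ) ≤ x+1),
      mul_nonneg (mul_nonneg hz (by linarith : (0:ℝ) ≤ x+1)) hpos.le,
      mul_le_mul_of_nonneg_left hq (le_of_lt (pow_pos hx0 (2*k))),
      pow_pos hx0 (2*k)]
  have := le_of_mul_le_mul_right key hpos
  calc (x-1)^k * (x+1)^(k+1)
      = (x^2-1)^k * (x+1) := by
        rw [show x^2 - 1 = (x-1)*(x+1) by ring, mul_pow, pow_succ]; ring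
    _ ≤ x^(2*k+1) := this

/-- core: for m ≥ 2, 1 ≤ s ≤ 2^m - 1:
  (2^m-1)^(m-1) * (s+1)^m ≤ s^(m-1) * (2^m)^m -/
lemma core_ineq (m : ℕ) (hm : 2 ≤ m) :
    ∀ s : ℕ, 1 ≤ s → s ≤ 2^m - 1 →
    ((2^m:ℝ) - 1)^(m-1) * ((s:ℝ)+1)^m ≤ (s:ℝ)^(m-1) * ((2^m:ℝ))^m := by
  have hn2 : (2:ℕ) ≤ 2^m := by
    calc (2:ℕ) = 2^1 := rfl
    _ ≤ 2^m := Nat.pow_le_pow_right (by norm_num) (by omega)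
  have hnR : (2:ℝ) ≤ (2^m:ℝ) := by exact_mod_cast hn2
  set Q : ℕ → Prop := fun s => ((2^m:ℝ) - 1)^(m-1) * ((s:ℝ)+1)^m ≤ (s:ℝ)^(m-1) * ((2^m:ℝ))^m with hQ
  have hme : m - 1 + m = 2*(m-1)+1 := by omega
  have hmm : m - 1 + 1 = m := by omega
  -- step up: Q (s+1) → Q s  for m ≤ s+1
  have stepUp : ∀ s : ℕ, 1 ≤ s → m ≤ s + 1 → Q (s+1) → Q s := by
    intro s hs1 hsm hQs
    have hx : ((m:ℝ) - 1) + 1 ≤ (s:ℝ) + 1 := by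
      have : (m:ℝ) ≤ (s:ℝ)+1 := by exact_mod_cast hsm
      linarith
    have hb := bern_up (m-1) ((s:ℝ)+1) (by
      have : ((m-1 : ℕ):ℝ) = (m:ℝ) - 1 := by
        have : (1:ℕ) ≤ m := by omega
        push_cast [Nat.cast_sub this]; ring
      rw [this]; linarith)
    -- hb : (s+1)^(2(m-1)+1) ≤ s^(m-1) * (s+2)^m
    rw [show ((s:ℝ)+1) - 1 = (s:ℝ) by ring, show ((s:ℝ)+1) + 1 = (s:ℝ)+2 by ring, hmm] at hb
    have hQs' : ((2^m:ℝ) - 1)^(m-1) * ((s:ℝ)+2)^m ≤ ((s:ℝ)+1)^(m-1) * ((2^m:ℝ))^m := by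
      have := hQs
      simp only [hQ] at this
      push_cast at this
      convert this using 3 <;> ring
    -- multiply hQs' by (s+1)^m and use hb
    have hpow : ((s:ℝ)+1)^(m-1) * ((s:ℝ)+1)^m = ((s:ℝ)+1)^(2*(m-1)+1) := by
      rw [← pow_add, hme]
    have h1 : ((2^m:ℝ) - 1)^(m-1) * ((s:ℝ)+2)^m * ((s:ℝ)+1)^m
        ≤ ((s:ℝ)+1)^(2*(m-1)+1) * ((2^m:ℝ))^m := by
      calc ((2^m:ℝ) - 1)^(m-1) * ((s:ℝ)+2)^m * ((s:ℝ)+1)^m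
          ≤ ((s:ℝ)+1)^(m-1) * ((2^m:ℝ))^m * ((s:ℝ)+1)^m :=
            mul_le_mul_of_nonneg_right hQs' (by positivity)
        _ = ((s:ℝ)+1)^(2*(m-1)+1) * ((2^m:ℝ))^m := by rw [← hpow]; ring
    have h2 : ((s:ℝ)+1)^(2*(m-1)+1) * ((2^m:ℝ))^m ≤ (s:ℝ)^(m-1) * ((s:ℝ)+2)^m * ((2^m:ℝ))^m :=
      mul_le_mul_of_nonneg_right hb (by positivity)
    have h3 : ((2^m:ℝ) - 1)^(m-1) * ((s:ℝ)+1)^m * ((s:ℝ)+2)^m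
        ≤ (s:ℝ)^(m-1) * ((2^m:ℝ))^m * ((s:ℝ)+2)^m := by nlinarith [h1, h2]
    have hp2 : (0:ℝ) < ((s:ℝ)+2)^m := by positivity
    exact le_of_mul_le_mul_right h3 hp2
  -- step down: Q s → Q (s+1)  for s+1 ≤ m-1
  have stepDown : ∀ s : ℕ, 1 ≤ s → s + 1 ≤ m - 1 → Q s → Q (s+1) := by
    intro s hs1 hsm hQs
    have hsR : (1:ℝ) ≤ (s:ℝ) := by exact_mod_cast hs1
    have hb := bern_down (m-1) ((s:ℝ)+1) (by linarith)
      (by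
        have : ((s:ℕ)+1 : ℝ) ≤ ((m-1 : ℕ):ℝ) := by exact_mod_cast hsm
        push_cast at this; linarith)
    rw [show ((s:ℝ)+1) - 1 = (s:ℝ) by ring, show ((s:ℝ)+1) + 1 = (s:ℝ)+2 by ring, hmm] at hb
    -- hb : s^(m-1) * (s+2)^m ≤ (s+1)^(2(m-1)+1)
    have hpow : ((s:ℝ)+1)^(m-1) * ((s:ℝ)+1)^m = ((s:ℝ)+1)^(2*(m-1)+1) := by
      rw [← pow_add, hme]
    have h1 : ((2^m:ℝ) - 1)^(m-1) * ((s:ℝ)+1)^m * ((s:ℝ)+2)^m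
        ≤ (s:ℝ)^(m-1) * ((2^m:ℝ))^m * ((s:ℝ)+2)^m :=
      mul_le_mul_of_nonneg_right hQs (by positivity)
    have h2 : (s:ℝ)^(m-1) * ((s:ℝ)+2)^m * ((2^m:ℝ))^m ≤ ((s:ℝ)+1)^(2*(m-1)+1) * ((2^m:ℝ))^m :=
      mul_le_mul_of_nonneg_right hb (by positivity)
    have goal' : ((2^m:ℝ) - 1)^(m-1) * ((s:ℝ)+2)^m * (((s:ℝ)+1)^m * (s:ℝ)^(m-1))
        ≤ ((s:ℝ)+1)^(m-1) * ((2^m:ℝ))^m * (((s:ℝ)+1)^m * (s:ℝ)^(m-1)) := by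
      calc ((2^m:ℝ) - 1)^(m-1) * ((s:ℝ)+2)^m * (((s:ℝ)+1)^m * (s:ℝ)^(m-1))
          = (((2^m:ℝ) - 1)^(m-1) * ((s:ℝ)+1)^m * ((s:ℝ)+2)^m) * (s:ℝ)^(m-1) := by ring
        _ ≤ ((s:ℝ)^(m-1) * ((2^m:ℝ))^m * ((s:ℝ)+2)^m) * (s:ℝ)^(m-1) :=
            mul_le_mul_of_nonneg_right h1 (by positivity)
        _ = ((s:ℝ)^(m-1) * ((s:ℝ)+2)^m * ((2^m:ℝ))^m) * (s:ℝ)^(m-1) := by ring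
        _ ≤ (((s:ℝ)+1)^(2*(m-1)+1) * ((2^m:ℝ))^m) * (s:ℝ)^(m-1) :=
            mul_le_mul_of_nonneg_right h2 (by positivity)
        _ = ((s:ℝ)+1)^(m-1) * ((2^m:ℝ))^m * (((s:ℝ)+1)^m * (s:ℝ)^(m-1)) := by
            rw [← hpow]; ring
    have hppos : (0:ℝ) < ((s:ℝ)+1)^m * (s:ℝ)^(m-1) := by positivity
    have := le_of_mul_le_mul_right goal' hppos
    simp only [hQ]
    push_cast
    rw [show ((s:ℝ)+1+1) = (s:ℝ)+2 by ring]; exact this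
  -- base at s = 1
  have base1 : Q 1 := by
    simp only [hQ]
    norm_num
    have h1 : ((2^m:ℝ) - 1)^(m-1) ≤ ((2^m:ℝ))^(m-1) := by
      apply pow_le_pow_left₀ (by linarith) (by linarith)
    calc ((2^m:ℝ) - 1)^(m-1) * 2^m ≤ ((2^m:ℝ))^(m-1) * 2^m :=
          mul_le_mul_of_nonneg_right h1 (by positivity)
      _ = ((2^m:ℝ))^m := by rw [← pow_succ, hmm]
  -- base at s = 2^m - 1
  have baseTop : Q (2^m - 1) := by
    simp only [hQ]
    have hc : (((2^m - 1 : ℕ)):ℝ) = (2^m:ℝ) - 1 := by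
      push_cast [Nat.cast_sub (by omega : 1 ≤ 2^m)]; ring
    rw [hc, show ((2^m:ℝ) - 1) + 1 = (2^m:ℝ) by ring]
  -- region B: 1 ≤ s ≤ m-1
  have regB : ∀ s : ℕ, 1 ≤ s → s ≤ m - 1 → Q s := by
    intro s
    induction s with
    | zero => intro h _; omega
    | succ t ih =>
      intro _ hsm
      rcases Nat.eq_zero_or_pos t with h0 | h0
      · subst h0; exact base1
      · exact stepDown t h0 (by omega) (ih h0 (by omega))
  -- region A: m-1 ≤ s ≤ 2^m-1, downward induction
  have regA : ∀ k : ℕ, ∀ s : ℕ, s + k = 2^m - 1 → m - 1 ≤ s → Q s := by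
    intro k
    induction k with
    | zero => intro s hs _; rw [Nat.add_zero] at hs; rw [hs]; exact baseTop
    | succ t ih =>
      intro s hs hsm
      have hs1 : 1 ≤ s := by omega
      exact stepUp s hs1 (by omega) (ih (s+1) (by omega) (by omega))
  intro s hs1 hs2
  by_cases hc : m - 1 ≤ s
  · exact regA (2^m - 1 - s) s (by omega) hc
  · exact regB s hs1 (by omega)

lemma hit_lb (m : ℕ) (hm : 1 ≤ m) {d : ℕ} (s : Fin d → ℕ)
    (h1 : ∀ ℓ, 1 ≤ s ℓ) (h2 : ∀ ℓ, s ℓ ≤ 2^m - 1)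
    (hprod : 2^(m*(d-1)) < ∏ ℓ, (s ℓ + 1)) :
    ((2^m:ℝ) - 1)^d ≤ 2^(m+2) * ∏ ℓ : Fin d, (s ℓ : ℝ) := by
  have hn2 : (2:ℕ) ≤ 2^m := by
    calc (2:ℕ) = 2^1 := rfl
    _ ≤ 2^m := Nat.pow_le_pow_right (by norm_num) (by omega)
  have hnR : (2:ℝ) ≤ (2^m:ℝ) := by exact_mod_cast hn2
  rcases Nat.eq_zero_or_pos d with hd0 | hd1
  · subst hd0
    simp
    have h8 : (1:ℝ) ≤ 2^(m+2) := one_le_pow₀ (by norm_num)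
    linarith
  rcases Nat.lt_or_ge m 2 with hm1 | hm2
  · -- m = 1
    have hm1' : m = 1 := by omega
    subst hm1'
    have hs : ∀ ℓ, s ℓ = 1 := fun ℓ => le_antisymm (by simpa using h2 ℓ) (h1 ℓ)
    have hone : ∏ ℓ : Fin d, (s ℓ : ℝ) = 1 := by
      apply Finset.prod_eq_one; intro ℓ _; rw [hs ℓ]; norm_num
    rw [hone]
    norm_num
  · -- m ≥ 2
    set c : ℝ := (2^m:ℝ) - 1 with hc
    have hcpos : (0:ℝ) < c := by rw [hc]; linarith
    set A : ℝ := ∏ ℓ : Fin d, ((s ℓ : ℝ)/c) with hA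
    set B : ℝ := ∏ ℓ : Fin d, (((s ℓ : ℝ)+1)/(2^m:ℝ)) with hB
    have hApos : 0 < A := by
      apply Finset.prod_pos; intro ℓ _
      have : (1:ℝ) ≤ (s ℓ : ℝ) := by exact_mod_cast h1 ℓ
      positivity
    have hper : ∀ ℓ : Fin d, (((s ℓ : ℝ)+1)/(2^m:ℝ))^m ≤ ((s ℓ : ℝ)/c)^(m-1) := by
      intro ℓ
      have hco := core_ineq m hm2 (s ℓ) (h1 ℓ) (h2 ℓ)
      rw [div_pow, div_pow, div_le_div_iff₀ (by positivity) (by positivity)]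
      calc ((s ℓ:ℝ)+1)^m * c^(m-1) = c^(m-1) * ((s ℓ:ℝ)+1)^m := by ring
        _ ≤ (s ℓ:ℝ)^(m-1) * ((2^m:ℝ))^m := hco
    have hBA : B^m ≤ A^(m-1) := by
      rw [hA, hB, ← Finset.prod_pow, ← Finset.prod_pow]
      apply Finset.prod_le_prod
      · intro ℓ _; positivity
      · intro ℓ _; exact hper ℓ
    have hBlow : ((2:ℝ)^m)⁻¹ ≤ B := by
      have hcast : ((2:ℝ))^(m*(d-1)) < ∏ ℓ : Fin d, ((s ℓ : ℝ)+1) := by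
        have h' : ((2^(m*(d-1)) : ℕ) : ℝ) < ((∏ ℓ, (s ℓ + 1) : ℕ) : ℝ) := by exact_mod_cast hprod
        push_cast at h'
        exact h'
      have hBeq : B = (∏ ℓ : Fin d, ((s ℓ : ℝ)+1)) / ((2:ℝ)^m)^d := by
        rw [hB, Finset.prod_div_distrib, Finset.prod_const, Finset.card_univ, Fintype.card_fin]
      rw [hBeq, le_div_iff₀ (by positivity)]
      have hmd : m * (d-1) + m = m * d := by
        cases d with
        | zero => omega
        | succ d' => rw [Nat.succ_sub_one]; ring
      have heq : ((2:ℝ)^m)⁻¹ * ((2:ℝ)^m)^d = (2:ℝ)^(m*(d-1)) := by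
        rw [← pow_mul, ← hmd, pow_add]
        field_simp
      rw [heq]; linarith
    have hBm : ((2:ℝ)^(m*m))⁻¹ ≤ B^m := by
      have h0 : (0:ℝ) ≤ ((2:ℝ)^m)⁻¹ := by positivity
      have := pow_le_pow_left₀ h0 hBlow m
      rwa [inv_pow, ← pow_mul] at this
    have hAc : ((2:ℝ)^(m+2))⁻¹ ≤ A := by
      by_contra hcon
      push_neg at hcon
      have h1' : A^(m-1) < (((2:ℝ)^(m+2))⁻¹)^(m-1) :=
        pow_lt_pow_left₀ hcon hApos.le (by omega)
      have h2' : (((2:ℝ)^(m+2))⁻¹)^(m-1) = ((2:ℝ)^((m+2)*(m-1)))⁻¹ := by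
        rw [inv_pow, ← pow_mul]
      have h3' : ((2:ℝ)^((m+2)*(m-1)))⁻¹ ≤ ((2:ℝ)^(m*m))⁻¹ := by
        apply inv_anti₀ (by positivity)
        apply pow_le_pow_right₀ (by norm_num)
        zify [show 1 ≤ m from by omega]
        nlinarith
      linarith [hBA, hBm]
    -- conclude
    have hAeq : A = (∏ ℓ : Fin d, (s ℓ : ℝ)) / c^d := by
      rw [hA, Finset.prod_div_distrib, Finset.prod_const, Finset.card_univ, Fintype.card_fin]
    rw [hAeq, le_div_iff₀ (by positivity)] at hAc
    have h2pos : (0:ℝ) < (2:ℝ)^(m+2) := by positivity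
    calc c^d = (2:ℝ)^(m+2) * (((2:ℝ)^(m+2))⁻¹ * c^d) := by field_simp
      _ ≤ (2:ℝ)^(m+2) * ∏ ℓ : Fin d, (s ℓ : ℝ) := by
          apply mul_le_mul_of_nonneg_left hAc h2pos.le

def gridF (m : ℕ) : Finset ℕ := Finset.Icc 1 (2^m - 1)

def ptsF (m d : ℕ) : Finset (Fin d → ℕ) := Fintype.piFinset (fun _ => gridF m)

def hitF (d : ℕ) (s j : Fin d → ℕ) : Finset (Fin d → ℕ) :=
  Fintype.piFinset (fun ℓ => Finset.Icc (j ℓ) (j ℓ + s ℓ - 1))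

def evF (m d : ℕ) : Finset ((Fin d → ℕ) × (Fin d → ℕ)) :=
  ((ptsF m d) ×ˢ (ptsF m d)).filter
    (fun e => (∀ ℓ, e.1 ℓ + e.2 ℓ ≤ 2^m) ∧ 2^(m*(d-1)) < ∏ ℓ, (e.1 ℓ + 1))

lemma mem_gridF {m i : ℕ} : i ∈ gridF m ↔ 1 ≤ i ∧ i ≤ 2^m - 1 := by
  simp [gridF]

lemma mem_ptsF {m d : ℕ} {x : Fin d → ℕ} : x ∈ ptsF m d ↔ ∀ ℓ, 1 ≤ x ℓ ∧ x ℓ ≤ 2^m - 1 := by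
  simp [ptsF, Fintype.mem_piFinset, mem_gridF]

lemma card_gridF (m : ℕ) : (gridF m).card = 2^m - 1 := by
  simp [gridF]

lemma card_ptsF (m d : ℕ) : (ptsF m d).card = (2^m - 1)^d := by
  simp [ptsF, Fintype.card_piFinset, card_gridF]

lemma mem_evF {m d : ℕ} {e : (Fin d → ℕ) × (Fin d → ℕ)} :
    e ∈ evF m d ↔ (e.1 ∈ ptsF m d ∧ e.2 ∈ ptsF m d) ∧
      (∀ ℓ, e.1 ℓ + e.2 ℓ ≤ 2^m) ∧ 2^(m*(d-1)) < ∏ ℓ, (e.1 ℓ + 1) := by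
  simp [evF, Finset.mem_filter, Finset.mem_product, and_assoc]

lemma hit_subset {m d : ℕ} {e : (Fin d → ℕ) × (Fin d → ℕ)} (he : e ∈ evF m d) :
    hitF d e.1 e.2 ⊆ ptsF m d := by
  rw [mem_evF] at he
  obtain ⟨⟨h1, h2⟩, h3, _⟩ := he
  intro z hz
  simp only [hitF, Fintype.mem_piFinset] at hz
  rw [mem_ptsF]
  intro ℓ
  have hz' := hz ℓ
  rw [Finset.mem_Icc] at hz'
  have hj := (mem_ptsF.mp h2) ℓ
  have hs := (mem_ptsF.mp h1) ℓ
  constructor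
  · omega
  · have := h3 ℓ; omega

lemma card_hitF {m d : ℕ} {e : (Fin d → ℕ) × (Fin d → ℕ)} (he : e ∈ evF m d) :
    (hitF d e.1 e.2).card = ∏ ℓ, e.1 ℓ := by
  rw [mem_evF] at he
  obtain ⟨⟨h1, h2⟩, _, _⟩ := he
  rw [hitF, Fintype.card_piFinset]
  apply Finset.prod_congr rfl
  intro ℓ _
  rw [Nat.card_Icc]
  have hj := (mem_ptsF.mp h2) ℓ
  have hs := (mem_ptsF.mp h1) ℓ
  omega

-- the set of "non-full" coordinates is small
lemma Kcard {m d : ℕ} (hm : 1 ≤ m) {e : (Fin d → ℕ) × (Fin d → ℕ)} (he : e ∈ evF m d) :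
    (univ.filter (fun ℓ => e.1 ℓ ≠ 2^m - 1)).card < m * 2^m := by
  have hn2 : (2:ℕ) ≤ 2^m := by
    calc (2:ℕ) = 2^1 := rfl
    _ ≤ 2^m := Nat.pow_le_pow_right (by norm_num) (by omega)
  rw [mem_evF] at he
  obtain ⟨⟨h1, _⟩, _, hprod⟩ := he
  set K := univ.filter (fun ℓ => e.1 ℓ ≠ 2^m - 1) with hK
  set k := K.card with hk
  by_contra hcon
  push_neg at hcon
  -- k ≥ m * 2^m ≥ m*(2^m - 1) ≥ 1
  have hk1 : 1 ≤ k := by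
    have : 0 < m * 2^m := Nat.mul_pos (by omega) (Nat.pow_pos (by norm_num))
    omega
  have hkd : k ≤ d := by
    calc k ≤ (univ : Finset (Fin d)).card := Finset.card_le_card (Finset.filter_subset _ _)
      _ = d := by simp
  -- split the product
  have hsplit : (∏ ℓ, (e.1 ℓ + 1)) = (∏ ℓ ∈ K, (e.1 ℓ + 1)) * ∏ ℓ ∈ Kᶜ, (e.1 ℓ + 1) := by
    rw [← Finset.prod_mul_prod_compl K]
  have hKc : ∀ ℓ ∈ Kᶜ, e.1 ℓ + 1 = 2^m := by
    intro ℓ hℓ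
    simp [hK, Finset.mem_compl] at hℓ
    have := (mem_ptsF.mp h1) ℓ
    omega
  have hKccard : Kᶜ.card = d - k := by
    rw [Finset.card_compl]
    simp [hk]
  have hKcprod : (∏ ℓ ∈ Kᶜ, (e.1 ℓ + 1)) = (2^m)^(d-k) := by
    rw [Finset.prod_congr rfl hKc, Finset.prod_const, hKccard]
  have hKup : (∏ ℓ ∈ K, (e.1 ℓ + 1)) ≤ (2^m - 1)^k := by
    calc (∏ ℓ ∈ K, (e.1 ℓ + 1)) ≤ ∏ ℓ ∈ K, (2^m - 1) := by
          apply Finset.prod_le_prod'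
          intro ℓ hℓ
          simp [hK] at hℓ
          have := (mem_ptsF.mp h1) ℓ
          omega
      _ = (2^m - 1)^k := by rw [Finset.prod_const, hk]
  -- so 2^(m*(d-1)) < (2^m-1)^k * (2^m)^(d-k)
  have hmain : 2^(m*(d-1)) < (2^m - 1)^k * (2^m)^(d-k) := by
    calc 2^(m*(d-1)) < ∏ ℓ, (e.1 ℓ + 1) := hprod
      _ = (∏ ℓ ∈ K, (e.1 ℓ + 1)) * (2^m)^(d-k) := by rw [hsplit, hKcprod]
      _ ≤ (2^m - 1)^k * (2^m)^(d-k) := Nat.mul_le_mul_right _ hKup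
  -- rewrite exponent
  obtain ⟨k', hkk⟩ : ∃ k', k = k' + 1 := ⟨k - 1, by omega⟩
  rw [hkk] at hmain hkd
  obtain ⟨r, hr⟩ : ∃ r, d = (k' + 1) + r := ⟨d - (k'+1), by omega⟩
  have hexp : m*(d-1) = m*k' + m*r := by
    subst hr
    have : (k' + 1 + r) - 1 = k' + r := by omega
    rw [this, Nat.mul_add]
  have hdk : d - (k'+1) = r := by omega
  have hmain2 : 2^(m*k') < (2^m - 1)^(k'+1) := by
    have h' : 2^(m*k') * (2^m)^r < (2^m - 1)^(k'+1) * (2^m)^r := by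
      calc 2^(m*k') * (2^m)^r = 2^(m*(d-1)) := by rw [hexp, pow_add, pow_mul, pow_mul]
        _ < (2^m - 1)^(k'+1) * (2^m)^(d-(k'+1)) := hmain
        _ = (2^m - 1)^(k'+1) * (2^m)^r := by rw [hdk]
    exact Nat.lt_of_mul_lt_mul_right h'
  -- now the real contradiction: for k ≥ m*(2^m - 1), (2^m-1)^k ≤ 2^(m*(k-1))
  set n : ℝ := (2^m : ℝ) with hn
  have hnR : (2:ℝ) ≤ n := by rw [hn]; exact_mod_cast hn2
  have hn1 : (0:ℝ) < n - 1 := by linarith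
  have hbase : n ≤ (n/(n-1))^(m*(2^m - 1)) := by
    have hb1 : (2:ℝ) ≤ (n/(n-1))^(2^m - 1) := by
      have hb := one_add_mul_le_pow (a := 1/(n-1)) (by
        have : (0:ℝ) < 1/(n-1) := by positivity
        linarith) (2^m - 1)
      have hcast : ((2^m - 1 : ℕ) : ℝ) = n - 1 := by
        rw [hn]; push_cast [Nat.cast_sub (by omega : 1 ≤ 2^m)]; ring
      have : 1 + ((2^m - 1 : ℕ):ℝ) * (1/(n-1)) = 2 := by rw [hcast]; field_simp; try norm_num
      rw [this] at hb
      have hq : (1:ℝ) + 1/(n-1) = n/(n-1) := by field_simp; ring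
      calc (2:ℝ) ≤ (1 + 1/(n-1))^(2^m-1) := hb
        _ = (n/(n-1))^(2^m-1) := by rw [hq]
    calc n = (2:ℝ)^m := hn
      _ ≤ ((n/(n-1))^(2^m-1))^m := pow_le_pow_left₀ (by norm_num) hb1 m
      _ = (n/(n-1))^(m*(2^m-1)) := by rw [← pow_mul, mul_comm]
  have hmono : (n/(n-1))^(m*(2^m-1)) ≤ (n/(n-1))^(k'+1) := by
    apply pow_le_pow_right₀
    · rw [le_div_iff₀ hn1]; linarith
    · have : m*(2^m-1) ≤ m*2^m := Nat.mul_le_mul_left m (by omega)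
      omega
  have hfin : n * (n-1)^(k'+1) ≤ n^(k'+1) := by
    have h5 : n ≤ (n/(n-1))^(k'+1) := le_trans hbase hmono
    have h6 := mul_le_mul_of_nonneg_right h5 (le_of_lt (pow_pos hn1 (k'+1)))
    calc n * (n-1)^(k'+1) ≤ (n/(n-1))^(k'+1) * (n-1)^(k'+1) := h6
      _ = n^(k'+1) := by rw [div_pow]; field_simp
  -- but hmain2 says n^(k'+1) < n * (n-1)^(k'+1)
  have hmain3 : n^(k'+1) < n * (n-1)^(k'+1) := by
    have hc1 : ((2^(m*k') : ℕ):ℝ) < (((2^m - 1)^(k'+1) : ℕ):ℝ) := by exact_mod_cast hmain2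
    have hcast : ((2^m - 1 : ℕ) : ℝ) = n - 1 := by
      rw [hn]; push_cast [Nat.cast_sub (by omega : 1 ≤ 2^m)]; ring
    have hc2 : (2:ℝ)^(m*k') < (n-1)^(k'+1) := by
      rw [← hcast]; push_cast at hc1 ⊢; exact hc1
    have hnk : n^(k'+1) = n * (2:ℝ)^(m*k') := by
      rw [hn, ← pow_mul]
      rw [show m*(k'+1) = m + m*k' by ring, pow_add]
    rw [hnk]
    have hnpos : (0:ℝ) < n := by linarith
    exact mul_lt_mul_of_pos_left hc2 hnpos
  linarith

def tripF (m d : ℕ) : Finset (ℕ × ℕ × ℕ) := (Finset.range d) ×ˢ (gridF m ×ˢ gridF m)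

noncomputable def encF (m d : ℕ) (e : (Fin d → ℕ) × (Fin d → ℕ)) : Fin (m*2^m) → ℕ × ℕ × ℕ :=
  fun i => ((univ.filter (fun ℓ => e.1 ℓ ≠ 2^m - 1)).toList[i.val]?).elim
    (0, 2^m - 1, 1) (fun ℓ => (ℓ.val, e.1 ℓ, e.2 ℓ))

open Classical in
noncomputable def decF (m d : ℕ) (F : Fin (m*2^m) → ℕ × ℕ × ℕ) :
    (Fin d → ℕ) × (Fin d → ℕ) :=
  (fun ℓ => if h : ∃ i, (F i).1 = ℓ.val ∧ (F i).2.1 ≠ 2^m - 1 then (F h.choose).2.1 else 2^m - 1,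
   fun ℓ => if h : ∃ i, (F i).1 = ℓ.val ∧ (F i).2.1 ≠ 2^m - 1 then (F h.choose).2.2 else 1)

lemma decode_encode {m d : ℕ} (hm : 1 ≤ m) {e : (Fin d → ℕ) × (Fin d → ℕ)}
    (he : e ∈ evF m d) : decF m d (encF m d e) = e := by
  have hn2 : (2:ℕ) ≤ 2^m := by
    calc (2:ℕ) = 2^1 := rfl
    _ ≤ 2^m := Nat.pow_le_pow_right (by norm_num) (by omega)
  obtain ⟨⟨h1, h2⟩, h3, _⟩ := mem_evF.mp he
  set K := univ.filter (fun ℓ => e.1 ℓ ≠ 2^m - 1) with hK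
  set l := K.toList with hl
  have hlen : l.length < m * 2^m := by
    rw [hl, Finset.length_toList]; exact Kcard hm he
  -- analysis of encF values
  have henc : ∀ i : Fin (m*2^m), (∃ ℓ : Fin d, ℓ ∈ K ∧ encF m d e i = (ℓ.val, e.1 ℓ, e.2 ℓ))
      ∨ encF m d e i = (0, 2^m - 1, 1) := by
    intro i
    rcases ho : l[i.val]? with _ | ℓ
    · right; simp [encF, ← hK, ← hl, ho]
    · left
      refine ⟨ℓ, ?_, ?_⟩
      · rw [← Finset.mem_toList, ← hl]
        exact List.mem_of_getElem? ho
      · simp [encF, ← hK, ← hl, ho]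
  have key : ∀ ℓ : Fin d,
      (if h : ∃ i, (encF m d e i).1 = ℓ.val ∧ (encF m d e i).2.1 ≠ 2^m - 1
        then (encF m d e h.choose).2 else (2^m - 1, 1)) = (e.1 ℓ, e.2 ℓ) := by
    intro ℓ
    by_cases hmem : ℓ ∈ K
    · have hne : e.1 ℓ ≠ 2^m - 1 := by
        rw [hK] at hmem; simpa using hmem
      have hex : ∃ i : Fin (m*2^m), (encF m d e i).1 = ℓ.val ∧ (encF m d e i).2.1 ≠ 2^m - 1 := by
        have hml : ℓ ∈ l := by rw [hl, Finset.mem_toList]; exact hmem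
        obtain ⟨idx, hidx, hget⟩ := List.mem_iff_getElem.mp hml
        refine ⟨⟨idx, lt_trans hidx hlen⟩, ?_⟩
        have : l[(⟨idx, lt_trans hidx hlen⟩ : Fin (m*2^m)).val]? = some ℓ := by
          simp [List.getElem?_eq_getElem hidx, hget]
        simp [encF, ← hK, ← hl, this, hne]
      rw [dif_pos hex]
      obtain ⟨hw1, hw2⟩ := hex.choose_spec
      rcases henc hex.choose with ⟨ℓ'', hℓ''K, hval⟩ | hval
      · rw [hval] at hw1 ⊢
        have : ℓ'' = ℓ := Fin.val_injective hw1
        subst this; rfl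
      · rw [hval] at hw2; simp at hw2
    · have heq : e.1 ℓ = 2^m - 1 := by
        rw [hK] at hmem; simpa using hmem
      have hnex : ¬ ∃ i : Fin (m*2^m), (encF m d e i).1 = ℓ.val ∧ (encF m d e i).2.1 ≠ 2^m - 1 := by
        rintro ⟨i, hi1, hi2⟩
        rcases henc i with ⟨ℓ'', _, hval⟩ | hval
        · rw [hval] at hi1 hi2
          have : ℓ'' = ℓ := Fin.val_injective hi1
          subst this
          exact hi2 heq
        · rw [hval] at hi2; simp at hi2
      rw [dif_neg hnex]
      have hj1 : e.2 ℓ = 1 := by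
        have := h3 ℓ
        have := (mem_ptsF.mp h2) ℓ
        omega
      rw [heq, hj1]
  -- conclude
  have k1 : ∀ ℓ, (decF m d (encF m d e)).1 ℓ = e.1 ℓ := by
    intro ℓ
    have k := congrArg Prod.fst (key ℓ)
    simp only [decF]
    by_cases hc : ∃ i, (encF m d e i).1 = ℓ.val ∧ (encF m d e i).2.1 ≠ 2^m - 1
    · rw [dif_pos hc]; rw [dif_pos hc] at k; exact k
    · rw [dif_neg hc]; rw [dif_neg hc] at k; exact k
  have k2 : ∀ ℓ, (decF m d (encF m d e)).2 ℓ = e.2 ℓ := by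
    intro ℓ
    have k := congrArg Prod.snd (key ℓ)
    simp only [decF]
    by_cases hc : ∃ i, (encF m d e i).1 = ℓ.val ∧ (encF m d e i).2.1 ≠ 2^m - 1
    · rw [dif_pos hc]; rw [dif_pos hc] at k; exact k
    · rw [dif_neg hc]; rw [dif_neg hc] at k; exact k
  exact Prod.ext (funext k1) (funext k2)

lemma evF_card_le {m d : ℕ} (hm : 1 ≤ m) (hd : 1 ≤ d) :
    (evF m d).card ≤ (d * (2^m * 2^m))^(m * 2^m) := by
  have hn2 : (2:ℕ) ≤ 2^m := by
    calc (2:ℕ) = 2^1 := rfl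
    _ ≤ 2^m := Nat.pow_le_pow_right (by norm_num) (by omega)
  have maps : ∀ e ∈ evF m d,
      encF m d e ∈ Fintype.piFinset (fun _ : Fin (m*2^m) => tripF m d) := by
    intro e he
    obtain ⟨⟨h1, h2⟩, _, _⟩ := mem_evF.mp he
    rw [Fintype.mem_piFinset]
    intro i
    rcases ho : (univ.filter (fun ℓ => e.1 ℓ ≠ 2^m - 1)).toList[i.val]? with _ | ℓ
    · have : encF m d e i = (0, 2^m - 1, 1) := by simp [encF, ho]
      rw [this]
      simp [tripF, Finset.mem_product, mem_gridF, Finset.mem_range]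
      omega
    · have : encF m d e i = (ℓ.val, e.1 ℓ, e.2 ℓ) := by simp [encF, ho]
      rw [this]
      have hs := (mem_ptsF.mp h1) ℓ
      have hj := (mem_ptsF.mp h2) ℓ
      simp [tripF, Finset.mem_product, mem_gridF, Finset.mem_range]
      have hlt := ℓ.isLt
      tauto
  have hinj : Set.InjOn (encF m d) (evF m d) := by
    intro e he e' he' heq
    have := decode_encode hm he
    rw [heq, decode_encode hm he'] at this
    exact this.symm
  calc (evF m d).card ≤ (Fintype.piFinset (fun _ : Fin (m*2^m) => tripF m d)).card :=
        Finset.card_le_card_of_injOn _ maps hinj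
    _ = ((tripF m d).card)^(m*2^m) := by
        rw [Fintype.card_piFinset]
        simp
    _ ≤ (d * (2^m * 2^m))^(m * 2^m) := by
        apply Nat.pow_le_pow_left
        have : (tripF m d).card = d * ((2^m - 1) * (2^m - 1)) := by
          simp [tripF, gridF]
        rw [this]
        have h1 : (2^m - 1) * (2^m - 1) ≤ 2^m * 2^m :=
          Nat.mul_le_mul (by omega) (by omega)
        exact Nat.mul_le_mul_left d h1

lemma exists_tuple (m d N : ℕ)
    (hnum : ∑ e ∈ evF m d, ((ptsF m d).card - (hitF d e.1 e.2).card)^N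
      < (ptsF m d).card ^ N) :
    ∃ w : Fin N → Fin d → ℕ, (∀ i, w i ∈ ptsF m d) ∧
      ∀ e ∈ evF m d, ∃ i, w i ∈ hitF d e.1 e.2 := by
  classical
  set W := Fintype.piFinset (fun _ : Fin N => ptsF m d) with hW
  set bad : ((Fin d → ℕ) × (Fin d → ℕ)) → Finset (Fin N → Fin d → ℕ) :=
    fun e => Fintype.piFinset (fun _ : Fin N => ptsF m d \ hitF d e.1 e.2) with hbad
  have hcardW : W.card = (ptsF m d).card ^ N := by
    rw [hW, Fintype.card_piFinset]; simp
  have hcardbad : ∀ e ∈ evF m d,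
      (bad e).card = ((ptsF m d).card - (hitF d e.1 e.2).card)^N := by
    intro e he
    rw [hbad, Fintype.card_piFinset]
    rw [Finset.card_sdiff_of_subset (hit_subset he)]
    simp
  have hlt : ((evF m d).biUnion bad).card < W.card := by
    calc ((evF m d).biUnion bad).card ≤ ∑ e ∈ evF m d, (bad e).card :=
          Finset.card_biUnion_le
      _ = ∑ e ∈ evF m d, ((ptsF m d).card - (hitF d e.1 e.2).card)^N :=
          Finset.sum_congr rfl hcardbad
      _ < (ptsF m d).card ^ N := hnum
      _ = W.card := hcardW.symm
  have hex : ∃ w ∈ W, w ∉ (evF m d).biUnion bad := by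
    by_contra hc
    push_neg at hc
    have hsub : W ⊆ (evF m d).biUnion bad := fun w hw => hc w hw
    have := Finset.card_le_card hsub
    omega
  obtain ⟨w, hwW, hwnb⟩ := hex
  refine ⟨w, ?_, ?_⟩
  · intro i
    exact (Fintype.mem_piFinset.mp hwW) i
  · intro e he
    by_contra hc
    push_neg at hc
    apply hwnb
    rw [Finset.mem_biUnion]
    refine ⟨e, he, ?_⟩
    rw [hbad, Fintype.mem_piFinset]
    intro i
    rw [Finset.mem_sdiff]
    exact ⟨(Fintype.mem_piFinset.mp hwW) i, hc i⟩

lemma key_num (m d N : ℕ) (hm : 1 ≤ m) (hd : 2 ≤ d)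
    (hN : (N : ℝ) > (m : ℝ) * 2 ^ (2 * m + 4) * Real.log (2 ^ (m + 3) * (d : ℝ))) :
    (((d * (2^m * 2^m))^(m * 2^m) : ℕ) : ℝ) * (1 - ((2:ℝ)^(m+2))⁻¹)^N < 1 := by
  have hn2 : (2:ℕ) ≤ 2^m := by
    calc (2:ℕ) = 2^1 := rfl
    _ ≤ 2^m := Nat.pow_le_pow_right (by norm_num) (by omega)
  set ε : ℝ := ((2:ℝ)^(m+2))⁻¹ with hε
  have hεpos : 0 < ε := by positivity
  have hεsmall : ε ≤ 1/8 := by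
    rw [hε]
    rw [inv_le_comm₀ (by positivity) (by norm_num)]
    calc (1/8 : ℝ)⁻¹ = 2^3 := by norm_num
      _ ≤ 2^(m+2) := by
          apply pow_le_pow_right₀ (by norm_num)
          omega
  have h1ε : 0 < 1 - ε := by linarith
  set L : ℝ := Real.log (2 ^ (m + 3) * (d : ℝ)) with hL
  have hargL : (1:ℝ) < 2^(m+3) * d := by
    have h2d : (2:ℝ) ≤ d := by exact_mod_cast hd
    have : (1:ℝ) ≤ 2^(m+3) := one_le_pow₀ (by norm_num)
    nlinarith
  have hLpos : 0 < L := Real.log_pos hargL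
  -- log(1-ε) ≤ -ε
  have hlogε : Real.log (1 - ε) ≤ -ε := by
    have := Real.log_le_sub_one_of_pos h1ε
    linarith
  -- N * ε > m * 2^(m+2) * L
  have hNε : (N:ℝ) * ε > (m:ℝ) * 2^(m+2) * L := by
    have h2 : ((2:ℝ)^(2*m+4)) * ε = 2^(m+2) := by
      rw [hε, show 2*m+4 = (m+2)+(m+2) by ring, pow_add]
      field_simp
    have hmL : 0 ≤ (m:ℝ) * L := mul_nonneg (Nat.cast_nonneg m) hLpos.le
    calc (N:ℝ) * ε > ((m:ℝ) * 2^(2*m+4) * L) * ε := by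
          apply mul_lt_mul_of_pos_right hN hεpos
      _ = (m:ℝ) * 2^(m+2) * L := by rw [← h2]; ring
  -- log C ≤ m*2^m * 4 * L
  set C : ℕ := (d * (2^m * 2^m))^(m * 2^m) with hC
  have hCpos : 0 < C := by
    apply Nat.pow_pos
    have : 0 < 2^m := Nat.pow_pos (by norm_num)
    positivity
  have hCcast : ((C:ℕ):ℝ) = ((d * (2^m * 2^m) : ℕ):ℝ)^(m * 2^m) := by
    rw [hC]; push_cast; ring
  have hbase_le : ((d * (2^m * 2^m) : ℕ):ℝ) ≤ (2^(m+3) * (d:ℝ))^4 := by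
    have hnat : d * (2^m * 2^m) ≤ (2^(m+3) * d)^4 := by
      have h1 : d ≤ d^4 := Nat.le_self_pow (by norm_num) d
      have h2 : 2^m * 2^m ≤ (2^(m+3))^4 := by
        calc 2^m * 2^m = 2^(2*m) := by rw [← pow_add]; ring_nf
          _ ≤ 2^(4*m+12) := Nat.pow_le_pow_right (by norm_num) (by omega)
          _ = (2^(m+3))^4 := by rw [← pow_mul]; ring_nf
      calc d * (2^m * 2^m) ≤ d^4 * (2^(m+3))^4 := Nat.mul_le_mul h1 h2
        _ = (2^(m+3) * d)^4 := by rw [mul_pow]; ring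
    calc ((d * (2^m * 2^m) : ℕ):ℝ) ≤ (((2^(m+3) * d)^4 : ℕ):ℝ) := by exact_mod_cast hnat
      _ = (2^(m+3) * (d:ℝ))^4 := by push_cast; ring
  have hlogC : Real.log ((C:ℕ):ℝ) ≤ (m:ℝ) * 2^m * (4 * L) := by
    rw [hCcast, Real.log_pow]
    have hb0 : (0:ℝ) < ((d * (2^m * 2^m) : ℕ):ℝ) := by
      have : 0 < d * (2^m * 2^m) := by
        have : 0 < 2^m := Nat.pow_pos (by norm_num)
        positivity
      exact_mod_cast this
    have hlb : Real.log ((d * (2^m * 2^m) : ℕ):ℝ) ≤ 4 * L := by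
      calc Real.log ((d * (2^m * 2^m) : ℕ):ℝ) ≤ Real.log ((2^(m+3) * (d:ℝ))^4) :=
            Real.log_le_log hb0 hbase_le
        _ = 4 * L := by rw [Real.log_pow, hL]; push_cast; ring
    calc ((m * 2^m : ℕ):ℝ) * Real.log ((d * (2^m * 2^m) : ℕ):ℝ)
        ≤ ((m * 2^m : ℕ):ℝ) * (4 * L) := by
          apply mul_le_mul_of_nonneg_left hlb (by positivity)
      _ = (m:ℝ) * 2^m * (4 * L) := by push_cast; ring
  -- conclude via logs
  have hprodpos : (0:ℝ) < ((C:ℕ):ℝ) * (1 - ε)^N := by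
    have : (0:ℝ) < ((C:ℕ):ℝ) := by exact_mod_cast hCpos
    positivity
  have hlogtot : Real.log (((C:ℕ):ℝ) * (1 - ε)^N) < 0 := by
    rw [Real.log_mul (by positivity) (by positivity), Real.log_pow]
    have h4 : (m:ℝ) * 2^m * (4*L) = (m:ℝ) * 2^(m+2) * L := by
      rw [pow_add]; ring
    have hNlog : (N:ℝ) * Real.log (1-ε) ≤ -((N:ℝ)*ε) := by
      have := mul_le_mul_of_nonneg_left hlogε (Nat.cast_nonneg N)
      linarith [this]
    calc Real.log ((C:ℕ):ℝ) + (N:ℝ) * Real.log (1-ε)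
        ≤ (m:ℝ) * 2^(m+2) * L + (N:ℝ) * Real.log (1-ε) := by
          rw [← h4]; linarith [hlogC]
      _ ≤ (m:ℝ) * 2^(m+2) * L - (N:ℝ)*ε := by linarith [hNlog]
      _ < 0 := by linarith [hNε]
  calc ((C:ℕ):ℝ) * (1 - ε)^N = Real.exp (Real.log (((C:ℕ):ℝ) * (1 - ε)^N)) :=
        (Real.exp_log hprodpos).symm
    _ < Real.exp 0 := Real.exp_lt_exp.mpr hlogtot
    _ = 1 := Real.exp_zero

lemma sum_bound (m d N : ℕ) (hm : 1 ≤ m) (hd : 2 ≤ d)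
    (hN : (N : ℝ) > (m : ℝ) * 2 ^ (2 * m + 4) * Real.log (2 ^ (m + 3) * (d : ℝ))) :
    ∑ e ∈ evF m d, ((ptsF m d).card - (hitF d e.1 e.2).card)^N
      < (ptsF m d).card ^ N := by
  have hn2 : (2:ℕ) ≤ 2^m := by
    calc (2:ℕ) = 2^1 := rfl
    _ ≤ 2^m := Nat.pow_le_pow_right (by norm_num) (by omega)
  set ε : ℝ := ((2:ℝ)^(m+2))⁻¹ with hε
  have hεpos : 0 < ε := by positivity
  have hε1 : ε ≤ 1 := by
    rw [hε]
    have : (1:ℝ) ≤ 2^(m+2) := one_le_pow₀ (by norm_num)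
    exact inv_le_one_of_one_le₀ this
  set PcR : ℝ := ((2^m:ℝ) - 1)^d with hPcR
  have hPcRpos : 0 < PcR := by
    rw [hPcR]
    have : (2:ℝ) ≤ (2^m:ℝ) := by exact_mod_cast hn2
    have h1 : (0:ℝ) < (2^m:ℝ) - 1 := by linarith
    positivity
  have hPccast : (((ptsF m d).card : ℕ) : ℝ) = PcR := by
    rw [card_ptsF, hPcR]
    push_cast [Nat.cast_sub (by omega : 1 ≤ 2^m)]
    ring
  -- per-term bound
  have hterm : ∀ e ∈ evF m d,
      ((((ptsF m d).card - (hitF d e.1 e.2).card : ℕ)) : ℝ)^N ≤ ((1-ε) * PcR)^N := by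
    intro e he
    have hsubc := Finset.card_le_card (hit_subset he)
    have hcast : (((ptsF m d).card - (hitF d e.1 e.2).card : ℕ) : ℝ)
        = PcR - ((hitF d e.1 e.2).card : ℝ) := by
      push_cast [Nat.cast_sub hsubc]
      rw [hPccast]
    obtain ⟨⟨h1, _⟩, _, hprod⟩ := mem_evF.mp he
    have hlb := hit_lb m hm e.1 (fun ℓ => ((mem_ptsF.mp h1) ℓ).1)
      (fun ℓ => ((mem_ptsF.mp h1) ℓ).2) hprod
    have hHc : ((hitF d e.1 e.2).card : ℝ) = ∏ ℓ, (e.1 ℓ : ℝ) := by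
      rw [card_hitF he]; push_cast; rfl
    have hεP : ε * PcR ≤ ((hitF d e.1 e.2).card : ℝ) := by
      rw [hHc]
      have h2 : ε * PcR ≤ ε * (2^(m+2) * ∏ ℓ, (e.1 ℓ : ℝ)) := by
        apply mul_le_mul_of_nonneg_left _ hεpos.le
        rw [hPcR]; exact hlb
      have h3 : ε * (2^(m+2) * ∏ ℓ, (e.1 ℓ : ℝ)) = ∏ ℓ, (e.1 ℓ : ℝ) := by
        rw [hε]; field_simp
      linarith
    rw [hcast]
    apply pow_le_pow_left₀
    · have : ((hitF d e.1 e.2).card : ℝ) ≤ PcR := by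
        rw [← hPccast]; exact_mod_cast hsubc
      linarith
    · nlinarith [hεP]
  -- total bound, in ℝ
  have hkey := key_num m d N hm hd hN
  have hcardE : ((evF m d).card : ℝ) ≤ (((d * (2^m * 2^m))^(m * 2^m) : ℕ) : ℝ) := by
    exact_mod_cast evF_card_le hm (by omega)
  have hreal : (∑ e ∈ evF m d, ((((ptsF m d).card - (hitF d e.1 e.2).card : ℕ)) : ℝ)^N)
      < PcR ^ N := by
    calc (∑ e ∈ evF m d, ((((ptsF m d).card - (hitF d e.1 e.2).card : ℕ)) : ℝ)^N)
        ≤ ∑ _e ∈ evF m d, ((1-ε) * PcR)^N := Finset.sum_le_sum hterm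
      _ = ((evF m d).card : ℝ) * ((1-ε) * PcR)^N := by
          rw [Finset.sum_const, nsmul_eq_mul]
      _ ≤ (((d * (2^m * 2^m))^(m * 2^m) : ℕ) : ℝ) * ((1-ε) * PcR)^N := by
          apply mul_le_mul_of_nonneg_right hcardE
          have h1ε : (0:ℝ) ≤ 1 - ε := by linarith
          positivity
      _ = ((((d * (2^m * 2^m))^(m * 2^m) : ℕ) : ℝ) * (1-ε)^N) * PcR^N := by
          rw [mul_pow ((1:ℝ)-ε) PcR N, ← mul_assoc]
      _ < 1 * PcR^N := by
          apply mul_lt_mul_of_pos_right hkey (by positivity)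
      _ = PcR ^ N := by ring
  have hfin : (∑ e ∈ evF m d, ((((ptsF m d).card - (hitF d e.1 e.2).card : ℕ)) : ℝ)^N)
      < (((ptsF m d).card : ℕ) : ℝ) ^ N := by
    rw [hPccast]; exact hreal
  exact_mod_cast hfin

/-- If `N > m·2^{2m+4}·log(2^{m+3}·d)`, there is `P ⊆ M_m^d` with `#P ≤ N` meeting
`B_m(s,p)` for every `(s,p) ∈ 𝕀_m`; consequently `disp(P) ≤ 2^{-m}`. -/
theorem stmt_16 (m d N : ℕ) (hm : 1 ≤ m) (hd : 2 ≤ d)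
    (hN : (N : ℝ) > (m : ℝ) * 2 ^ (2 * m + 4) * Real.log (2 ^ (m + 3) * (d : ℝ))) :
    ∃ P : Finset (Fin d → ℝ),
      (∀ x ∈ P, ∀ ℓ, x ℓ ∈ Mgrid m) ∧ P.card ≤ N ∧
      (∀ (s : Fin d → ℕ) (p : Fin d → ℝ), (∀ ℓ, s ℓ ≤ 2 ^ m - 1) →
        (∀ ℓ, p ℓ ∈ Mgrid m) → OmegaNonempty m d s p →
        ∃ x ∈ P, ∀ ℓ, p ℓ ≤ x ℓ ∧ x ℓ ≤ p ℓ + ((s ℓ : ℝ) - 1) / 2 ^ m) ∧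
      ∀ (a b : Fin d → ℝ) (I : Fin d → Set ℝ),
        (∀ j, 0 ≤ a j ∧ a j ≤ b j ∧ b j ≤ 1) →
        (∀ j, Set.Ioo (a j) (b j) ⊆ I j ∧ I j ⊆ Set.Icc (a j) (b j)) →
        (∀ x ∈ P, ∃ j, x j ∉ I j) →
        ∏ j, (b j - a j) ≤ ((2 : ℝ) ^ m)⁻¹ := by
  classical
  have hn2 : (2:ℕ) ≤ 2^m := by
    calc (2:ℕ) = 2^1 := rfl
    _ ≤ 2^m := Nat.pow_le_pow_right (by norm_num) (by omega)
  have h2R : (0:ℝ) < (2:ℝ)^m := by positivity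
  obtain ⟨w, hw1, hw2⟩ := exists_tuple m d N (sum_bound m d N hm hd hN)
  set P : Finset (Fin d → ℝ) :=
    (univ : Finset (Fin N)).image (fun i => fun ℓ => ((w i ℓ : ℝ) / 2^m)) with hP
  have hPmem : ∀ x ∈ P, ∃ i : Fin N, x = fun ℓ => ((w i ℓ : ℝ) / 2^m) := by
    intro x hx
    rw [hP, Finset.mem_image] at hx
    obtain ⟨i, _, hi⟩ := hx
    exact ⟨i, hi.symm⟩
  -- clause 3 first
  have clause3 : ∀ (s : Fin d → ℕ) (p : Fin d → ℝ), (∀ ℓ, s ℓ ≤ 2 ^ m - 1) →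
      (∀ ℓ, p ℓ ∈ Mgrid m) → OmegaNonempty m d s p →
      ∃ x ∈ P, ∀ ℓ, p ℓ ≤ x ℓ ∧ x ℓ ≤ p ℓ + ((s ℓ : ℝ) - 1) / 2 ^ m := by
    intro s p hs hp hΩ
    obtain ⟨a, b, hab, hvol, hloc⟩ := hΩ
    choose j hj1 hj2 hj3 using hp
    have hfacnn : ∀ ℓ, (0:ℝ) ≤ b ℓ - a ℓ := by
      intro ℓ
      have h := (hloc ℓ).1
      have : (0:ℝ) ≤ (s ℓ : ℝ)/2^m := by positivity
      linarith
    have hfacle1 : ∀ ℓ, b ℓ - a ℓ ≤ 1 := by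
      intro ℓ; have := hab ℓ; linarith [this.1, this.2.1, this.2.2]
    have hone : ∀ ℓ₀ : Fin d, ∏ ℓ, (b ℓ - a ℓ) ≤ b ℓ₀ - a ℓ₀ := by
      intro ℓ₀
      rw [← Finset.mul_prod_erase univ _ (Finset.mem_univ ℓ₀)]
      have hle1 : ∏ ℓ ∈ univ.erase ℓ₀, (b ℓ - a ℓ) ≤ 1 :=
        Finset.prod_le_one (fun ℓ _ => hfacnn ℓ) (fun ℓ _ => hfacle1 ℓ)
      have hnn : (0:ℝ) ≤ ∏ ℓ ∈ univ.erase ℓ₀, (b ℓ - a ℓ) :=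
        Finset.prod_nonneg (fun ℓ _ => hfacnn ℓ)
      nlinarith [hfacnn ℓ₀]
    -- s ℓ ≥ 1
    have hs1 : ∀ ℓ, 1 ≤ s ℓ := by
      intro ℓ
      by_contra hc
      have hz : s ℓ = 0 := by omega
      have h := (hloc ℓ).2.1
      rw [hz] at h
      simp at h
      have : ∏ ℓ', (b ℓ' - a ℓ') ≤ ((2:ℝ)^m)⁻¹ := by
        have h0 := hone ℓ
        have h1m : (1:ℝ)/2^m = ((2:ℝ)^m)⁻¹ := one_div _
        nlinarith [h, h0]
      linarith
    -- s ℓ + j ℓ ≤ 2^m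
    have hsj : ∀ ℓ, s ℓ + j ℓ ≤ 2^m := by
      intro ℓ
      have h1 := (hloc ℓ).1
      have h2 := (hloc ℓ).2.2.1
      rw [hj3 ℓ] at h2
      have hb1 := (hab ℓ).2.2
      have k1 : (s ℓ:ℝ) < (b ℓ - a ℓ) * 2^m := (div_lt_iff₀ h2R).mp h1
      have k2 : (j ℓ:ℝ) - 1 ≤ a ℓ * 2^m := by
        have heq : (j ℓ : ℝ)/2^m - ((2:ℝ)^m)⁻¹ = ((j ℓ:ℝ) - 1)/2^m := by
          field_simp
        rw [heq] at h2
        exact (div_le_iff₀ h2R).mp h2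
      have k3 : b ℓ * 2^m ≤ 2^m := by nlinarith [hb1, h2R]
      have hreal : (s ℓ : ℝ) + (j ℓ : ℝ) < 2^m + 1 := by nlinarith [k1, k2, k3]
      have hcast : ((s ℓ + j ℓ : ℕ) : ℝ) < ((2^m + 1 : ℕ) : ℝ) := by push_cast; linarith
      have := Nat.cast_lt.mp hcast
      omega
    -- product bound
    have hprodN : 2^(m*(d-1)) < ∏ ℓ, (s ℓ + 1) := by
      have hp1 : ∏ ℓ, (b ℓ - a ℓ) ≤ ∏ ℓ, ((s ℓ:ℝ)+1)/2^m :=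
        Finset.prod_le_prod (fun ℓ _ => hfacnn ℓ) (fun ℓ _ => (hloc ℓ).2.1)
      have hp2 : ∏ ℓ, ((s ℓ:ℝ)+1)/2^m = (∏ ℓ, ((s ℓ:ℝ)+1)) / ((2:ℝ)^m)^d := by
        rw [Finset.prod_div_distrib, Finset.prod_const, Finset.card_univ, Fintype.card_fin]
      have hlt : ((2:ℝ)^m)⁻¹ < (∏ ℓ, ((s ℓ:ℝ)+1)) / ((2:ℝ)^m)^d := by
        rw [← hp2]; linarith
      rw [lt_div_iff₀ (by positivity)] at hlt
      have hexp : ((2:ℝ)^m)⁻¹ * ((2:ℝ)^m)^d = (2:ℝ)^(m*(d-1)) := by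
        obtain ⟨d', rfl⟩ : ∃ d', d = d' + 1 := ⟨d - 1, by omega⟩
        rw [Nat.add_sub_cancel, ← pow_mul, show m*(d'+1) = m*d' + m by ring, pow_add]
        field_simp
      rw [hexp] at hlt
      have : ((2^(m*(d-1)) : ℕ) : ℝ) < ((∏ ℓ, (s ℓ + 1) : ℕ) : ℝ) := by push_cast; linarith
      exact_mod_cast this
    -- the event is in evF
    have hej : (s, j) ∈ evF m d := by
      rw [mem_evF]
      refine ⟨⟨?_, ?_⟩, ?_, ?_⟩
      · rw [mem_ptsF]; exact fun ℓ => ⟨hs1 ℓ, hs ℓ⟩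
      · rw [mem_ptsF]; exact fun ℓ => ⟨hj1 ℓ, hj2 ℓ⟩
      · intro ℓ; exact hsj ℓ
      · exact hprodN
    obtain ⟨i, hi⟩ := hw2 (s, j) hej
    simp only [hitF, Fintype.mem_piFinset] at hi
    refine ⟨fun ℓ => ((w i ℓ : ℝ) / 2^m), ?_, ?_⟩
    · rw [hP, Finset.mem_image]; exact ⟨i, Finset.mem_univ i, rfl⟩
    · intro ℓ
      have hiℓ := hi ℓ
      rw [Finset.mem_Icc] at hiℓ
      constructor
      · rw [hj3 ℓ]
        exact (div_le_div_iff_of_pos_right h2R).mpr (by exact_mod_cast hiℓ.1)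
      · have h2' : (w i ℓ : ℝ) ≤ (j ℓ:ℝ) + ((s ℓ:ℝ) - 1) := by
          have hn := hiℓ.2
          have hc : ((j ℓ + s ℓ - 1 : ℕ):ℝ) = (j ℓ:ℝ) + (s ℓ:ℝ) - 1 := by
            push_cast [Nat.cast_sub (show 1 ≤ j ℓ + s ℓ by have := hj1 ℓ; omega)]
            ring
          calc (w i ℓ:ℝ) ≤ ((j ℓ + s ℓ - 1:ℕ):ℝ) := by exact_mod_cast hn
            _ = (j ℓ:ℝ) + ((s ℓ:ℝ) - 1) := by rw [hc]; ring
        rw [hj3 ℓ, ← add_div]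
        exact (div_le_div_iff_of_pos_right h2R).mpr h2'
  refine ⟨P, ?_, ?_, clause3, ?_⟩
  · -- membership in Mgrid
    intro x hx ℓ
    obtain ⟨i, rfl⟩ := hPmem x hx
    have hb := (mem_ptsF.mp (hw1 i)) ℓ
    exact ⟨w i ℓ, hb.1, hb.2, rfl⟩
  · -- cardinality
    calc P.card ≤ (univ : Finset (Fin N)).card := Finset.card_image_le
      _ = N := by simp
  · -- dispersion clause
    intro a b I hab hI hmiss
    by_contra hcon
    push_neg at hcon
    -- each side length exceeds 2^{-m}
    have hfacnn : ∀ ℓ, (0:ℝ) ≤ b ℓ - a ℓ := by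
      intro ℓ; have := hab ℓ; linarith [this.2.1]
    have hfacle1 : ∀ ℓ, b ℓ - a ℓ ≤ 1 := by
      intro ℓ; have := hab ℓ; linarith [this.1, this.2.1, this.2.2]
    have heach : ∀ ℓ : Fin d, ((2:ℝ)^m)⁻¹ < b ℓ - a ℓ := by
      intro ℓ
      have hone : ∏ ℓ', (b ℓ' - a ℓ') ≤ b ℓ - a ℓ := by
        rw [← Finset.mul_prod_erase univ _ (Finset.mem_univ ℓ)]
        have hle1 : ∏ ℓ' ∈ univ.erase ℓ, (b ℓ' - a ℓ') ≤ 1 :=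
          Finset.prod_le_one (fun ℓ' _ => hfacnn ℓ') (fun ℓ' _ => hfacle1 ℓ')
        have hnn : (0:ℝ) ≤ ∏ ℓ' ∈ univ.erase ℓ, (b ℓ' - a ℓ') :=
          Finset.prod_nonneg (fun ℓ' _ => hfacnn ℓ')
        nlinarith [hfacnn ℓ]
      linarith
    -- define s and p
    set S : Fin d → ℕ := fun ℓ => ⌈(b ℓ - a ℓ) * 2^m⌉₊ - 1 with hS
    set J : Fin d → ℕ := fun ℓ => ⌊a ℓ * 2^m⌋₊ + 1 with hJ
    have hceil2 : ∀ ℓ, 2 ≤ ⌈(b ℓ - a ℓ) * 2^m⌉₊ := by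
      intro ℓ
      have : (1:ℝ) < (b ℓ - a ℓ) * 2^m := by
        have := heach ℓ
        rw [inv_lt_iff_one_lt_mul₀' h2R] at this
        linarith [this]
      have := Nat.lt_ceil.mpr (by push_cast; linarith : ((1:ℕ):ℝ) < (b ℓ - a ℓ) * 2^m)
      omega
    have hceille : ∀ ℓ, ⌈(b ℓ - a ℓ) * 2^m⌉₊ ≤ 2^m := by
      intro ℓ
      apply Nat.ceil_le.mpr
      have : (b ℓ - a ℓ) * 2^m ≤ 1 * 2^m := by
        apply mul_le_mul_of_nonneg_right (hfacle1 ℓ) h2R.le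
      push_cast
      linarith
    have hScast : ∀ ℓ, (S ℓ : ℝ) = (⌈(b ℓ - a ℓ) * 2^m⌉₊ : ℝ) - 1 := by
      intro ℓ
      simp only [hS]
      push_cast [Nat.cast_sub (show 1 ≤ ⌈(b ℓ - a ℓ) * 2^m⌉₊ by have := hceil2 ℓ; omega)]
      ring
    have hSlow : ∀ ℓ, (S ℓ : ℝ)/2^m < b ℓ - a ℓ := by
      intro ℓ
      rw [div_lt_iff₀ h2R, hScast ℓ]
      have := Nat.ceil_lt_add_one (mul_nonneg (hfacnn ℓ) h2R.le)
      linarith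
    have hShigh : ∀ ℓ, b ℓ - a ℓ ≤ ((S ℓ : ℝ)+1)/2^m := by
      intro ℓ
      rw [le_div_iff₀ h2R, hScast ℓ]
      have := Nat.le_ceil ((b ℓ - a ℓ) * 2^m)
      linarith
    have hSub : ∀ ℓ, S ℓ ≤ 2^m - 1 := by
      intro ℓ
      have h1 := hceille ℓ
      have h2 := hceil2 ℓ
      simp only [hS]
      omega
    have hflo : ∀ ℓ, (⌊a ℓ * 2^m⌋₊ : ℝ) ≤ a ℓ * 2^m := by
      intro ℓ
      exact Nat.floor_le (by have := (hab ℓ).1; positivity)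
    have hflo2 : ∀ ℓ, a ℓ * 2^m < (⌊a ℓ * 2^m⌋₊ : ℝ) + 1 :=
      fun ℓ => Nat.lt_floor_add_one _
    have hJub : ∀ ℓ, J ℓ ≤ 2^m - 1 := by
      intro ℓ
      have hlt : a ℓ * 2^m < ((2^m - 1 : ℕ) : ℝ) := by
        have h1 := heach ℓ
        have h2 := (hab ℓ).2.2
        have hc : ((2^m - 1 : ℕ):ℝ) = (2:ℝ)^m - 1 := by
          push_cast [Nat.cast_sub (by omega : 1 ≤ 2^m)]
          norm_num
        rw [hc]
        have hainv : a ℓ < 1 - ((2:ℝ)^m)⁻¹ := by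
          have := (hab ℓ).2.1
          linarith
        have := mul_lt_mul_of_pos_right hainv h2R
        have hinv : ((2:ℝ)^m)⁻¹ * 2^m = 1 := inv_mul_cancel₀ (ne_of_gt h2R)
        nlinarith
      have := (Nat.floor_lt (by have := (hab ℓ).1; positivity)).mpr hlt
      simp only [hJ]
      omega
    set p : Fin d → ℝ := fun ℓ => (J ℓ : ℝ)/2^m with hp
    have hpgrid : ∀ ℓ, p ℓ ∈ Mgrid m := by
      intro ℓ
      exact ⟨J ℓ, by simp only [hJ]; omega, hJub ℓ, rfl⟩
    have hΩ : OmegaNonempty m d S p := by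
      refine ⟨a, b, hab, hcon, ?_⟩
      intro ℓ
      refine ⟨hSlow ℓ, hShigh ℓ, ?_, ?_⟩
      · have : p ℓ - ((2:ℝ)^m)⁻¹ = (⌊a ℓ * 2^m⌋₊ : ℝ)/2^m := by
          simp only [hp, hJ]
          push_cast
          field_simp; ring
        rw [this, div_le_iff₀ h2R]
        exact hflo ℓ
      · simp only [hp, hJ]
        rw [lt_div_iff₀ h2R]
        push_cast
        linarith [hflo2 ℓ]
    obtain ⟨x, hxP, hx⟩ := clause3 S p hSub hpgrid hΩ
    obtain ⟨ℓ₀, hℓ₀⟩ := hmiss x hxP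
    apply hℓ₀
    apply (hI ℓ₀).1
    constructor
    · have := (hx ℓ₀).1
      have hap : a ℓ₀ < p ℓ₀ := by
        simp only [hp, hJ]
        rw [lt_div_iff₀ h2R]
        push_cast
        linarith [hflo2 ℓ₀]
      linarith
    · have hxu := (hx ℓ₀).2
      have hup : p ℓ₀ + ((S ℓ₀:ℝ) - 1)/2^m < b ℓ₀ := by
        simp only [hp]
        rw [← add_div]
        rw [div_lt_iff₀ h2R]
        have h1 := hSlow ℓ₀
        rw [div_lt_iff₀ h2R] at h1
        have h2 := hflo ℓ₀
        have hJc : (J ℓ₀ : ℝ) = (⌊a ℓ₀ * 2^m⌋₊ : ℝ) + 1 := by rw [hJ]; push_cast; ring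
        nlinarith [h1, h2]
      linarith
end

section
/- For every natural number d ≥ 2 and every ε ∈ (0, 1/2), there exists a point set P ⊆ [0,1]^d with disp(P) ≤ ε and #P ≤ 2^7 · log₂(d) · (1 + log₂(ε^{-1}))² / ε². -/
set_option maxHeartbeats 1000000

open Finset



lemma weier {ι : Type*} (S : Finset ι) (g : ι → ℝ) (h0 : ∀ i ∈ S, 0 ≤ g i)
    (h1 : ∀ i ∈ S, g i ≤ 1) :
    1 - ∑ i ∈ S, g i ≤ ∏ i ∈ S, (1 - g i) := by
  induction S using Finset.cons_induction with
  | empty => simp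
  | cons a S ha ih =>
    rw [Finset.sum_cons, Finset.prod_cons]
    have h0a := h0 a (Finset.mem_cons_self a S)
    have h1a := h1 a (Finset.mem_cons_self a S)
    have ih' := ih (fun i hi => h0 i (Finset.mem_cons_of_mem hi))
      (fun i hi => h1 i (Finset.mem_cons_of_mem hi))
    have hs : (0:ℝ) ≤ ∑ i ∈ S, g i :=
      Finset.sum_nonneg (fun i hi => h0 i (Finset.mem_cons_of_mem hi))
    nlinarith [mul_le_mul_of_nonneg_left ih' (by linarith : (0:ℝ) ≤ 1 - g a),
      mul_nonneg h0a hs]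

lemma exists_good {X C : Type*} [Fintype X] [DecidableEq X] [Nonempty X] [Fintype C]
    (n : ℕ) (codes : Finset C) (Hit : C → Finset X) (δ : ℝ) (hδ1 : δ ≤ 1)
    (hsize : ∀ c ∈ codes, δ * (Fintype.card X : ℝ) ≤ ((Hit c).card : ℝ))
    (hsum : (Fintype.card C : ℝ) * (1 - δ) ^ n < 1) :
    ∃ ω : Fin n → X, ∀ c ∈ codes, ∃ i, ω i ∈ Hit c := by
  classical
  set bad : Finset (Fin n → X) :=
    codes.biUnion (fun c => Fintype.piFinset (fun _ : Fin n => (Hit c)ᶜ)) with hbad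
  have hX : (0:ℝ) < Fintype.card X := by
    exact_mod_cast Fintype.card_pos
  have hcard : ∀ c ∈ codes,
      ((Fintype.piFinset (fun _ : Fin n => (Hit c)ᶜ)).card : ℝ)
        ≤ ((1 - δ) * Fintype.card X) ^ n := by
    intro c hc
    rw [Fintype.card_piFinset]
    simp only [Finset.card_compl, Finset.prod_const, Finset.card_univ, Fintype.card_fin]
    have hle : (Hit c).card ≤ Fintype.card X := by
      simpa using Finset.card_le_card (Finset.subset_univ (Hit c))
    have h1 : ((Fintype.card X - (Hit c).card : ℕ) : ℝ)
        = (Fintype.card X : ℝ) - (Hit c).card := by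
      push_cast [Nat.cast_sub hle]; ring
    rw [Nat.cast_pow, h1]
    apply pow_le_pow_left₀ (by linarith [hsize c hc, hX])
    nlinarith [hsize c hc]
  have hbadcard : (bad.card : ℝ) < (Fintype.card X : ℝ) ^ n := by
    have h2 : (bad.card : ℝ) ≤ (codes.card : ℝ) * ((1 - δ) * Fintype.card X) ^ n := by
      calc (bad.card : ℝ)
          ≤ ∑ c ∈ codes, ((Fintype.piFinset (fun _ : Fin n => (Hit c)ᶜ)).card : ℝ) := by
            exact_mod_cast Nat.cast_le.mpr (Finset.card_biUnion_le)
        _ ≤ ∑ _c ∈ codes, ((1 - δ) * Fintype.card X) ^ n :=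
            Finset.sum_le_sum hcard
        _ = (codes.card : ℝ) * ((1 - δ) * Fintype.card X) ^ n := by
            rw [Finset.sum_const, nsmul_eq_mul]
    have h3 : (codes.card : ℝ) ≤ (Fintype.card C : ℝ) := by
      exact_mod_cast Finset.card_le_card (Finset.subset_univ codes)
    have h4 : (0:ℝ) ≤ ((1 - δ) * Fintype.card X) ^ n := by
      exact pow_nonneg (mul_nonneg (by linarith) hX.le) n
    calc (bad.card : ℝ) ≤ (Fintype.card C : ℝ) * ((1 - δ) * Fintype.card X) ^ n := by
          nlinarith
      _ = ((Fintype.card C : ℝ) * (1 - δ) ^ n) * (Fintype.card X : ℝ) ^ n := by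
          rw [mul_pow]; ring
      _ < 1 * (Fintype.card X : ℝ) ^ n := by
          apply mul_lt_mul_of_pos_right hsum (by positivity)
      _ = _ := one_mul _
  have hex : ∃ ω : Fin n → X, ω ∉ bad := by
    by_contra h
    push_neg at h
    have : (Finset.univ : Finset (Fin n → X)).card ≤ bad.card :=
      Finset.card_le_card (fun ω _ => h ω)
    rw [Finset.card_univ, Fintype.card_fun] at this
    simp only [Fintype.card_fin] at this
    exact absurd (lt_of_le_of_lt (by exact_mod_cast this) hbadcard) (lt_irrefl _)
  obtain ⟨ω, hω⟩ := hex
  refine ⟨ω, fun c hc => ?_⟩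
  by_contra hno
  push_neg at hno
  exact hω (Finset.mem_biUnion.mpr ⟨c, hc, Fintype.mem_piFinset.mpr
    (fun i => Finset.mem_compl.mpr (hno i))⟩)

open Finset
set_option maxHeartbeats 1000000 in


lemma sum_one_sub_le {d : ℕ} (ε : ℝ) (L : Fin d → ℝ) (hε : 0 < ε)
    (hL0 : ∀ j, 0 < L j) (hvol : ε < ∏ j, L j) :
    ∑ j, (1 - L j) ≤ Real.log ε⁻¹ := by
  have h1 : ∑ j, (1 - L j) ≤ ∑ j, -Real.log (L j) :=
    Finset.sum_le_sum fun j _ => by nlinarith [Real.log_le_sub_one_of_pos (hL0 j)]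
  have h2 : ∑ j, -Real.log (L j) = -Real.log (∏ j, L j) := by
    rw [Real.log_prod fun j _ => (hL0 j).ne']
    exact Finset.sum_neg_distrib (f := fun j => Real.log (L j))
  have h3 : Real.log ε ≤ Real.log (∏ j, L j) := Real.log_le_log hε hvol.le
  rw [Real.log_inv]
  linarith

lemma core_validity (d N : ℕ) (ε : ℝ) (hε : 0 < ε) (hε2 : ε < 1/2)
    (L : Fin d → ℝ) (cnt : Fin d → ℕ)
    (hL1 : ∀ j, L j ≤ 1) (hL00 : ∀ j, 0 ≤ L j) (hvol : ε < ∏ j, L j)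
    (hcnt : ∀ j, L j * ((N : ℝ) + 1) - 1 ≤ (cnt j : ℝ))
    (hLb1 : 1 < Real.logb 2 ε⁻¹)
    (hN8 : 8 * Real.log ε⁻¹ ≤ (N : ℝ))
    (hN4 : 4 * Real.logb 2 ε⁻¹ ≤ ε * N) :
    ε / 2 * (N : ℝ) ^ d ≤ ∏ j, (cnt j : ℝ) := by
  classical
  have hLr0 : 0 < Real.log ε⁻¹ := Real.log_pos (by
    rw [lt_inv_comm₀ (by norm_num) hε]; linarith)
  have hNpos : (0:ℝ) < N := lt_of_lt_of_le (by linarith) hN8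
  have hL0 : ∀ j, 0 < L j := by
    intro j
    rcases eq_or_lt_of_le (hL00 j) with h | h
    · exfalso
      have : ∏ j, L j = 0 := Finset.prod_eq_zero (Finset.mem_univ j) h.symm
      rw [this] at hvol; linarith
    · exact h
  have hprodpos : (0:ℝ) < ∏ j, L j := lt_trans hε hvol
  have hLj : ∀ j, ∏ k, L k ≤ L j := by
    intro j
    rw [← Finset.prod_erase_mul Finset.univ L (Finset.mem_univ j)]
    apply mul_le_of_le_one_left (hL00 j)
    exact Finset.prod_le_one (fun k _ => hL00 k) (fun k _ => hL1 k)
  have hεN : 4 ≤ ε * N := by nlinarith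
  have hsum1 : ∑ j, (1 - L j) ≤ Real.log ε⁻¹ := sum_one_sub_le ε L hε hL0 hvol
  -- the small-coordinates set
  set S₁ : Finset (Fin d) := Finset.univ.filter (fun j => L j < 1/2) with hS₁
  have ht : (S₁.card : ℝ) ≤ Real.logb 2 ε⁻¹ := by
    have h2t : ε < (1/2 : ℝ) ^ S₁.card := by
      have ha : ∏ j, L j ≤ ∏ j ∈ S₁, L j := by
        rw [← Finset.prod_filter_mul_prod_filter_not Finset.univ (fun j => L j < 1/2) L]
        apply mul_le_of_le_one_right (Finset.prod_nonneg fun k _ => hL00 k)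
        exact Finset.prod_le_one (fun k _ => hL00 k) (fun k _ => hL1 k)
      have hb : ∏ j ∈ S₁, L j ≤ (1/2 : ℝ) ^ S₁.card := by
        rw [← Finset.prod_const]
        exact Finset.prod_le_prod (fun j _ => hL00 j)
          (fun j hj => (Finset.mem_filter.mp hj).2.le)
      linarith
    have h2t' : (2:ℝ) ^ S₁.card < ε⁻¹ := by
      rw [show ((1:ℝ)/2) ^ S₁.card = ((2:ℝ) ^ S₁.card)⁻¹ by
        rw [one_div, inv_pow]] at h2t
      have := (inv_lt_inv₀ (by positivity) hε).mpr h2t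
      simpa using this
    calc (S₁.card : ℝ) = Real.logb 2 ((2:ℝ) ^ S₁.card) := by
          rw [Real.logb_pow, Real.logb_self_eq_one (by norm_num)]; ring
      _ ≤ Real.logb 2 ε⁻¹ :=
          Real.logb_le_logb_of_le (by norm_num) (by positivity) (le_of_lt h2t')
  -- per-coordinate ratio bounds
  have hN1 : (1:ℝ) ≤ N := by
    have : (0:ℕ) < N := by exact_mod_cast hNpos
    exact_mod_cast this
  have hLε : ∀ j, ε ≤ L j := fun j => le_trans (le_of_lt hvol) (hLj j)
  -- Bound on the small-coordinate product
  have bound1 : (∏ j ∈ S₁, L j) * (3/4) ≤ ∏ j ∈ S₁, ((cnt j : ℝ) / N) := by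
    have hα : 1/(ε*N) ≤ 1/4 := by
      rw [div_le_div_iff₀ (by nlinarith) (by norm_num)]; linarith
    have hstep : ∀ j ∈ S₁, L j * (1 - 1/(ε*N)) ≤ (cnt j : ℝ)/N := by
      intro j _
      rw [le_div_iff₀ hNpos]
      have e1 : L j * (1 - 1/(ε*N)) * N = L j * N - L j / ε := by
        field_simp
      have e2 : 1 ≤ L j / ε := (one_le_div hε).mpr (hLε j)
      have := hcnt j
      rw [e1]
      nlinarith [hL00 j]
    calc (∏ j ∈ S₁, L j) * (3/4)
        ≤ (∏ j ∈ S₁, L j) * (1 - 1/(ε*N)) ^ S₁.card := by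
          apply mul_le_mul_of_nonneg_left _ (Finset.prod_nonneg fun j _ => hL00 j)
          have hber : 1 + (S₁.card : ℝ) * (-(1/(ε*N))) ≤ (1 + -(1/(ε*N))) ^ S₁.card :=
            one_add_mul_le_pow (by nlinarith) _
          have hd : (S₁.card : ℝ) * (1/(ε*N)) ≤ 1/4 := by
            have h4 : (S₁.card : ℝ) * 4 ≤ ε * N := by nlinarith
            rw [mul_one_div, div_le_div_iff₀ (by nlinarith) (by norm_num)]
            linarith
          calc (3/4 : ℝ) ≤ 1 + (S₁.card : ℝ) * (-(1/(ε*N))) := by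
                push_cast; nlinarith
            _ ≤ (1 + -(1/(ε*N))) ^ S₁.card := hber
            _ = (1 - 1/(ε*N)) ^ S₁.card := by ring_nf
      _ = ∏ j ∈ S₁, (L j * (1 - 1/(ε*N))) := by
          rw [Finset.prod_mul_distrib, Finset.prod_const]
      _ ≤ ∏ j ∈ S₁, ((cnt j : ℝ)/N) :=
          Finset.prod_le_prod (fun j _ => by nlinarith [hL00 j, hLε j]) hstep
  -- Bound on the large-coordinate product
  have bound2 : (∏ j ∈ Finset.univ.filter (fun j => ¬ (L j < 1/2)), L j) * (3/4)
      ≤ ∏ j ∈ Finset.univ.filter (fun j => ¬ (L j < 1/2)), ((cnt j : ℝ) / N) := by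
    set Sc := Finset.univ.filter (fun j => ¬ (L j < 1/2)) with hSc
    have hmemSc : ∀ j ∈ Sc, (1/2 : ℝ) ≤ L j := by
      intro j hj
      have := (Finset.mem_filter.mp hj).2
      linarith [not_lt.mp this]
    have hg0 : ∀ j ∈ Sc, 0 ≤ 2*(1 - L j)/N := fun j hj =>
      div_nonneg (by linarith [hL1 j]) hNpos.le
    have hg1 : ∀ j ∈ Sc, 2*(1 - L j)/N ≤ 1 := by
      intro j hj
      rw [div_le_one hNpos]
      nlinarith [hmemSc j hj]
    have hstep : ∀ j ∈ Sc, L j * (1 - 2*(1 - L j)/N) ≤ (cnt j : ℝ)/N := by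
      intro j hj
      rw [le_div_iff₀ hNpos]
      have e1 : L j * (1 - 2*(1 - L j)/N) * N = L j * N - 2 * L j * (1 - L j) := by
        field_simp
      rw [e1]
      nlinarith [hcnt j, hmemSc j hj, hL1 j]
    have hsumg : ∑ j ∈ Sc, 2*(1 - L j)/N ≤ 1/4 := by
      have h1 : ∑ j ∈ Sc, (1 - L j) ≤ Real.log ε⁻¹ := by
        refine le_trans (Finset.sum_le_sum_of_subset_of_nonneg (Finset.subset_univ Sc)
          (fun j _ _ => by linarith [hL1 j])) hsum1
      have h2 : ∑ j ∈ Sc, 2*(1 - L j)/N = (2/N) * ∑ j ∈ Sc, (1 - L j) := by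
        rw [Finset.mul_sum]
        exact Finset.sum_congr rfl fun j _ => by ring
      rw [h2, div_mul_eq_mul_div, div_le_div_iff₀ hNpos (by norm_num : (0:ℝ) < 4)]
      linarith
    have hwei : 1 - ∑ j ∈ Sc, 2*(1 - L j)/N ≤ ∏ j ∈ Sc, (1 - 2*(1 - L j)/N) :=
      weier Sc _ hg0 hg1
    calc (∏ j ∈ Sc, L j) * (3/4)
        ≤ (∏ j ∈ Sc, L j) * ∏ j ∈ Sc, (1 - 2*(1 - L j)/N) := by
          apply mul_le_mul_of_nonneg_left _ (Finset.prod_nonneg fun j _ => hL00 j)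
          linarith
      _ = ∏ j ∈ Sc, (L j * (1 - 2*(1 - L j)/N)) := (Finset.prod_mul_distrib).symm
      _ ≤ ∏ j ∈ Sc, ((cnt j : ℝ)/N) := by
          apply Finset.prod_le_prod _ hstep
          intro j hj
          have := hg1 j hj
          nlinarith [hL00 j, hg0 j hj]
  -- combine
  have hqprod : ε / 2 ≤ ∏ j, ((cnt j : ℝ) / N) := by
    rw [← Finset.prod_filter_mul_prod_filter_not Finset.univ (fun j => L j < 1/2)
      (fun j => (cnt j : ℝ)/N)]
    have hp1 : (0:ℝ) ≤ ∏ j ∈ S₁, L j := Finset.prod_nonneg fun j _ => hL00 j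
    have hp2 : (0:ℝ) ≤ ∏ j ∈ Finset.univ.filter (fun j => ¬ (L j < 1/2)), L j :=
      Finset.prod_nonneg fun j _ => hL00 j
    have hsplit : (∏ j ∈ S₁, L j) *
        (∏ j ∈ Finset.univ.filter (fun j => ¬ (L j < 1/2)), L j) = ∏ j, L j :=
      Finset.prod_filter_mul_prod_filter_not Finset.univ _ _
    have := mul_le_mul bound1 bound2 (by nlinarith) (Finset.prod_nonneg fun j hj =>
      by positivity)
    calc ε/2 ≤ (∏ j, L j) * (9/16) := by nlinarith
      _ = ((∏ j ∈ S₁, L j) * (3/4)) *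
          ((∏ j ∈ Finset.univ.filter (fun j => ¬ (L j < 1/2)), L j) * (3/4)) := by
          rw [← hsplit]; ring
      _ ≤ _ := this
  have hfin : ∏ j, (cnt j : ℝ) = (∏ j, ((cnt j : ℝ)/N)) * (N:ℝ)^d := by
    calc ∏ j, (cnt j : ℝ) = ∏ j, ((cnt j : ℝ)/N * N) :=
          Finset.prod_congr rfl fun j _ => (div_mul_cancel₀ _ hNpos.ne').symm
      _ = (∏ j, ((cnt j : ℝ)/N)) * ∏ _j : Fin d, (N:ℝ) := Finset.prod_mul_distrib
      _ = _ := by rw [Finset.prod_const, Finset.card_univ, Fintype.card_fin]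
  rw [hfin]
  exact mul_le_mul_of_nonneg_right hqprod (by positivity)

lemma exists_code (d Λ : ℕ) (x y : Fin d → ℕ) (hsum : ∑ j, (x j + y j) ≤ Λ) :
    ∃ c : List.Vector (Option (Fin d × Bool)) Λ,
      ∀ j, c.toList.count (some (j, false)) = x j ∧
           c.toList.count (some (j, true)) = y j := by
  classical
  set l0 : List (Option (Fin d × Bool)) :=
    (List.finRange d).flatMap
      (fun j => List.replicate (x j) (some (j, false)) ++
                List.replicate (y j) (some (j, true))) with hl0
  have hlen : l0.length = ∑ j, (x j + y j) := by
    rw [hl0, List.length_flatMap]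
    rw [Fin.sum_univ_def]
    congr 1
    apply List.map_congr_left
    intro j _
    simp
  have hlen' : l0.length ≤ Λ := by rw [hlen]; exact hsum
  refine ⟨⟨l0 ++ List.replicate (Λ - l0.length) none, by
    simp [List.length_append, List.length_replicate]; omega⟩, fun j => ?_⟩
  have hcount : ∀ b : Bool,
      (l0 ++ List.replicate (Λ - l0.length) none).count (some (j, b))
        = (if b then y j else x j) := by
    intro b
    rw [List.count_append]
    have h2 : (List.replicate (Λ - l0.length) (none : Option (Fin d × Bool))).count
        (some (j, b)) = 0 := by
      simp [List.count_replicate]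
    rw [h2, add_zero, hl0, List.count_flatMap]
    have hblock : ∀ j' : Fin d,
        ((List.replicate (x j') (some (j', false)) ++
          List.replicate (y j') (some (j', true))).count (some (j, b)))
          = if j' = j then (if b then y j else x j) else 0 := by
      intro j'
      rw [List.count_append, List.count_replicate, List.count_replicate]
      by_cases hj : j' = j
      · subst hj
        cases b <;> simp
      · have h1 : ((some (j, b) : Option (Fin d × Bool)) == some (j', false)) = false := by
          simp [beq_iff_eq]; intro h; exact absurd h.symm hj
        have h2 : ((some (j, b) : Option (Fin d × Bool)) == some (j', true)) = false := by
          simp [beq_iff_eq]; intro h; exact absurd h.symm hj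
        simp [h1, h2, hj]
    calc (List.map ((List.count (some (j, b))) ∘
          (fun j' => List.replicate (x j') (some (j', false)) ++
            List.replicate (y j') (some (j', true)))) (List.finRange d)).sum
        = (List.map (fun j' => if j' = j then (if b then y j else x j) else 0)
            (List.finRange d)).sum := by
          congr 1
          apply List.map_congr_left
          intro j' _
          exact hblock j'
      _ = ∑ j' : Fin d, (if j' = j then (if b then y j else x j) else 0) := by
          rw [Fin.sum_univ_def]
      _ = (if b then y j else x j) := by
          rw [Finset.sum_ite_eq' Finset.univ j]
          simp
  constructor
  · simpa using hcount false
  · simpa using hcount true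

/-- count of grid points compatible with code `c` in coordinate `j` -/
def cntcD (d N Λ : ℕ) (c : List.Vector (Option (Fin d × Bool)) Λ) (j : Fin d) : ℕ :=
  (Finset.univ.filter (fun p : Fin N =>
    c.toList.count (some (j, false)) ≤ (p : ℕ) ∧
    (p : ℕ) + c.toList.count (some (j, true)) + 1 ≤ N)).card

def HitD (d N Λ : ℕ) (c : List.Vector (Option (Fin d × Bool)) Λ) :
    Finset (Fin d → Fin N) :=
  Fintype.piFinset (fun j => Finset.univ.filter (fun p : Fin N =>
    c.toList.count (some (j, false)) ≤ (p : ℕ) ∧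
    (p : ℕ) + c.toList.count (some (j, true)) + 1 ≤ N))

lemma HitD_card (d N Λ : ℕ) (c : List.Vector (Option (Fin d × Bool)) Λ) :
    (HitD d N Λ c).card = ∏ j, cntcD d N Λ c j := by
  rw [HitD, Fintype.card_piFinset]
  rfl

lemma union_num (x ε : ℝ) (Λ n : ℕ) (hx : 0 < x)
    (hε : 0 < ε) (hε' : ε < 1/2) (hlogx : 0 < Real.log x)
    (hnlb : (2/ε)*(Λ:ℝ)*Real.log x < (n:ℝ)) : x^Λ * (1-ε/2)^n < 1 := by
  have hb0 : (0:ℝ) < 1 - ε/2 := by linarith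
  have hpos : (0:ℝ) < x^Λ * (1-ε/2)^n := mul_pos (pow_pos hx _) (pow_pos hb0 _)
  have hlog : Real.log (x^Λ * (1-ε/2)^n) < 0 := by
    rw [Real.log_mul (by positivity) (by positivity), Real.log_pow, Real.log_pow]
    have h1 : Real.log (1-ε/2) ≤ -(ε/2) := by
      have := Real.log_le_sub_one_of_pos hb0; linarith
    have h2 : (Λ:ℝ) * Real.log x < (n:ℝ)*(ε/2) := by
      have h3 : ((2/ε) * (Λ:ℝ) * Real.log x) * (ε/2) = (Λ:ℝ) * Real.log x := by
        field_simp
      nlinarith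
    have h4 : (n:ℝ) * Real.log (1-ε/2) ≤ (n:ℝ) * (-(ε/2)) :=
      mul_le_mul_of_nonneg_left h1 (Nat.cast_nonneg n)
    linarith
  exact (Real.log_neg_iff hpos).mp hlog

lemma budget_num (dr ε Lb Lr mR ΛR nR : ℝ)
    (hd2 : 2 ≤ dr) (hε : 0 < ε) (hε' : ε < 1/2) (hLb1 : 1 < Lb) (hLr0 : 0 < Lr)
    (hLbLr : Lr = Lb * Real.log 2)
    (hlogbd1 : 1 ≤ Real.logb 2 dr) (hlogd : Real.log dr = Real.logb 2 dr * Real.log 2)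
    (hεM : ε*mR ≤ 8*(1+Lb)) (hΛ : ΛR ≤ 2*mR*Lr+1) (hΛ0 : 0 ≤ ΛR) (hm0 : 0 ≤ mR)
    (hn : nR ≤ (2/ε)*ΛR*Real.log (2*dr+1) + 2) (hn0 : 0 ≤ nR) :
    nR ≤ 2^7 * Real.logb 2 dr * (1+Lb)^2/ε^2 := by
  have hlog2pos : 0 < Real.log 2 := Real.log_pos (by norm_num)
  have hLr07 : Lr ≤ (7/10) * Lb := by nlinarith [Real.log_two_lt_d9]
  have hlogd0 : 0 < Real.log (2*dr+1) := Real.log_pos (by linarith)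
  have hεΛ : ε*ΛR ≤ 12*(1+Lb)^2 := by
    have h1 : ε*ΛR ≤ ε*(2*mR*Lr + 1) := mul_le_mul_of_nonneg_left hΛ hε.le
    nlinarith [mul_le_mul_of_nonneg_right hεM hLr0.le]
  have hlogd3 : Real.log (2*dr+1) ≤ 3*Real.log 2 * Real.logb 2 dr := by
    have h1 : 2*dr+1 ≤ dr^3 := by
      nlinarith [mul_nonneg (mul_nonneg (sub_nonneg.mpr hd2) (by linarith : (0:ℝ) ≤ dr))
        (by linarith : (0:ℝ) ≤ dr), mul_nonneg (sub_nonneg.mpr hd2) (by linarith : (0:ℝ) ≤ dr)]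
    have h2 : Real.log (2*dr+1) ≤ Real.log (dr^3) := Real.log_le_log (by linarith) h1
    rw [Real.log_pow] at h2
    push_cast at h2
    rw [hlogd] at h2
    linarith
  have e1 : ε * nR ≤ 2*ΛR*Real.log (2*dr+1) + 2*ε := by
    have h1 : ε * ((2/ε)*ΛR*Real.log (2*dr+1) + 2)
        = 2*ΛR*Real.log (2*dr+1) + 2*ε := by
      field_simp
      try ring
    nlinarith [mul_le_mul_of_nonneg_left hn hε.le]
  have e2 : ε^2 * nR ≤ 2*(ε*ΛR)*Real.log (2*dr+1) + 2*ε^2 := by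
    nlinarith [mul_le_mul_of_nonneg_left e1 hε.le]
  have e3 : 2*(ε*ΛR)*Real.log (2*dr+1)
      ≤ 2*(12*(1+Lb)^2)*(3*Real.log 2 * Real.logb 2 dr) := by
    apply mul_le_mul
    · exact mul_le_mul_of_nonneg_left hεΛ (by norm_num)
    · exact hlogd3
    · exact hlogd0.le
    · positivity
  have ht : 0 ≤ (1+Lb)^2 * Real.logb 2 dr := mul_nonneg (sq_nonneg _) (by linarith)
  have e4 : 2*(12*(1+Lb)^2)*(3*Real.log 2 * Real.logb 2 dr)
      ≤ 50 * (1+Lb)^2 * Real.logb 2 dr := by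
    have h72 : 72*Real.log 2 ≤ 50 := by nlinarith [Real.log_two_lt_d9]
    nlinarith [mul_le_mul_of_nonneg_right h72 ht]
  have e5 : 2*ε^2 ≤ 2 * (1+Lb)^2 * Real.logb 2 dr := by
    nlinarith [hlogbd1]
  rw [le_div_iff₀ (by positivity)]
  nlinarith [e2, e3, e4, e5, ht]
/-- The Ullrich–Vybíral theorem: for `d ≥ 2` and `ε ∈ (0,1/2)` there is `P ⊆ [0,1]^d`
with `disp(P) ≤ ε` and `#P ≤ 2^7·log₂(d)·(1+log₂(ε⁻¹))²/ε²`. -/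
theorem stmt_17 (d : ℕ) (hd : 2 ≤ d) (ε : ℝ) (hε : 0 < ε) (hε' : ε < 1 / 2) :
    ∃ P : Finset (Fin d → ℝ),
      (∀ x ∈ P, ∀ j, x j ∈ Set.Icc (0 : ℝ) 1) ∧
      (P.card : ℝ) ≤ 2 ^ 7 * Real.logb 2 d * (1 + Real.logb 2 ε⁻¹) ^ 2 / ε ^ 2 ∧
      ∀ (a b : Fin d → ℝ) (I : Fin d → Set ℝ),
        (∀ j, 0 ≤ a j ∧ a j ≤ b j ∧ b j ≤ 1) →
        (∀ j, Set.Ioo (a j) (b j) ⊆ I j ∧ I j ⊆ Set.Icc (a j) (b j)) →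
        (∀ x ∈ P, ∃ j, x j ∉ I j) →
        ∏ j, (b j - a j) ≤ ε := by
  classical
  have hd2 : (2:ℝ) ≤ (d:ℝ) := by exact_mod_cast hd
  have hεinv : (2:ℝ) < ε⁻¹ := by
    rw [lt_inv_comm₀ (by norm_num) hε]; linarith
  set Lb := Real.logb 2 ε⁻¹ with hLbdef
  have hLb1 : 1 < Lb := by
    rw [hLbdef, show (1:ℝ) = Real.logb 2 2 from (Real.logb_self_eq_one (by norm_num)).symm]
    exact Real.logb_lt_logb (by norm_num) (by norm_num) hεinv
  set Lr := Real.log ε⁻¹ with hLrdef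
  have hLr0 : 0 < Lr := Real.log_pos (by linarith)
  have hlog2pos : 0 < Real.log 2 := Real.log_pos (by norm_num)
  have hLbLr : Lr = Lb * Real.log 2 := by
    rw [hLbdef, hLrdef, ← Real.log_div_log]
    field_simp
  have hLrLb : Lr ≤ Lb := by
    nlinarith [Real.log_two_lt_d9, hLb1]
  have hLr07 : Lr ≤ (7/10) * Lb := by
    nlinarith [Real.log_two_lt_d9, hLb1]
  -- grid size
  set N : ℕ := ⌈4*Lb/ε + 8*Lr⌉₊ + 1 with hNdef
  have hN0 : 0 < N := Nat.succ_pos _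
  have hNlb : 4*Lb/ε + 8*Lr ≤ (N:ℝ) := by
    rw [hNdef]; push_cast
    linarith [Nat.le_ceil (4*Lb/ε + 8*Lr)]
  have hN8 : 8*Lr ≤ (N:ℝ) := by
    have h1 : (0:ℝ) ≤ 4*Lb/ε := by positivity
    linarith
  have hN4 : 4*Lb ≤ ε*(N:ℝ) := by
    have h1 : 4*Lb/ε ≤ (N:ℝ) := by linarith
    calc 4*Lb = (4*Lb/ε)*ε := by field_simp
      _ ≤ (N:ℝ)*ε := mul_le_mul_of_nonneg_right h1 hε.le
      _ = ε*(N:ℝ) := mul_comm _ _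
  have hNub : (N:ℝ) ≤ 4*Lb/ε + 8*Lr + 2 := by
    rw [hNdef]; push_cast
    linarith [Nat.ceil_lt_add_one (show (0:ℝ) ≤ 4*Lb/ε + 8*Lr by positivity)]
  set M : ℕ := N + 1 with hMdef
  have hMreal : (M:ℝ) = (N:ℝ) + 1 := by rw [hMdef]; push_cast; ring
  have hMpos : (0:ℝ) < (M:ℝ) := by
    rw [hMreal]; positivity
  have hεMub : ε*(M:ℝ) ≤ 8*(1+Lb) := by
    rw [hMreal]
    have h1 : ε*((N:ℝ)+1) ≤ ε*(4*Lb/ε + 8*Lr + 3) := by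
      apply mul_le_mul_of_nonneg_left _ hε.le
      linarith
    have h2 : ε*(4*Lb/ε + 8*Lr + 3) = 4*Lb + ε*(8*Lr) + 3*ε := by
      field_simp
    nlinarith
  -- code length
  set Λ : ℕ := ⌈2*(M:ℝ)*Lr⌉₊ with hΛdef
  have hΛlb : 2*(M:ℝ)*Lr ≤ (Λ:ℝ) := Nat.le_ceil _
  have hΛub : (Λ:ℝ) ≤ 2*(M:ℝ)*Lr + 1 := by
    rw [hΛdef]
    exact le_of_lt (Nat.ceil_lt_add_one (by positivity))
  -- number of points
  have hlogd0 : 0 < Real.log (2*(d:ℝ)+1) := Real.log_pos (by linarith)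
  set n : ℕ := ⌈(2/ε) * (Λ:ℝ) * Real.log (2*(d:ℝ)+1)⌉₊ + 1 with hndef
  have hnlb : (2/ε) * (Λ:ℝ) * Real.log (2*(d:ℝ)+1) < (n:ℝ) := by
    rw [hndef]; push_cast
    linarith [Nat.le_ceil ((2/ε) * (Λ:ℝ) * Real.log (2*(d:ℝ)+1))]
  have hnub : (n:ℝ) ≤ (2/ε) * (Λ:ℝ) * Real.log (2*(d:ℝ)+1) + 2 := by
    rw [hndef]; push_cast
    linarith [Nat.ceil_lt_add_one (show (0:ℝ) ≤ (2/ε) * (Λ:ℝ) * Real.log (2*(d:ℝ)+1)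
      by positivity)]
  haveI : Nonempty (Fin N) := ⟨⟨0, hN0⟩⟩
  -- the code family
  set codes : Finset (List.Vector (Option (Fin d × Bool)) Λ) :=
    Finset.univ.filter (fun c => ε/2 * (N:ℝ)^d ≤ ∏ j, (cntcD d N Λ c j : ℝ)) with hcodes
  -- size hypothesis for exists_good
  have hsize : ∀ c ∈ codes, ε/2 * (Fintype.card (Fin d → Fin N) : ℝ)
      ≤ ((HitD d N Λ c).card : ℝ) := by
    intro c hc
    have h1 := (Finset.mem_filter.mp hc).2
    rw [HitD_card]
    have h2 : (Fintype.card (Fin d → Fin N) : ℝ) = (N:ℝ)^d := by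
      rw [Fintype.card_fun, Fintype.card_fin, Fintype.card_fin, Nat.cast_pow]
    rw [h2]
    calc ε/2 * (N:ℝ)^d ≤ ∏ j, (cntcD d N Λ c j : ℝ) := h1
      _ = ((∏ j, cntcD d N Λ c j : ℕ) : ℝ) := by push_cast; ring
  -- the union bound
  have hccard : (Fintype.card (List.Vector (Option (Fin d × Bool)) Λ) : ℝ)
      = (2*(d:ℝ)+1)^Λ := by
    rw [card_vector]
    push_cast
    congr 1
    simp [Fintype.card_option, Fintype.card_prod]
    push_cast; ring
  have hsum : (Fintype.card (List.Vector (Option (Fin d × Bool)) Λ) : ℝ)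
      * (1 - ε/2)^n < 1 := by
    rw [hccard]
    exact union_num _ ε Λ n (by linarith) hε hε' hlogd0 hnlb
  -- get the good point configuration
  obtain ⟨ω, hω⟩ := exists_good n codes (HitD d N Λ) (ε/2) (by linarith) hsize hsum
  -- the point set
  set P : Finset (Fin d → ℝ) :=
    Finset.image (fun i (j : Fin d) => (((ω i j : ℕ) : ℝ) + 1)/(M:ℝ)) Finset.univ with hP
  have hcard : P.card ≤ n := le_trans Finset.card_image_le (by simp)
  refine ⟨P, ?_, ?_, ?_⟩
  · -- coordinates in [0,1]
    intro x hx j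
    obtain ⟨i, -, rfl⟩ := Finset.mem_image.mp hx
    constructor
    · positivity
    · rw [div_le_one hMpos]
      have h1 : (ω i j : ℕ) < N := (ω i j).isLt
      rw [hMreal]
      have : ((ω i j : ℕ) : ℝ) < (N : ℝ) := by exact_mod_cast h1
      linarith
  · -- cardinality bound
    have hlogbd1 : 1 ≤ Real.logb 2 d := by
      rw [show (1:ℝ) = Real.logb 2 2 from (Real.logb_self_eq_one (by norm_num)).symm]
      exact Real.logb_le_logb_of_le (by norm_num) (by norm_num) hd2
    have hlogd : Real.log d = Real.logb 2 d * Real.log 2 := by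
      rw [← Real.log_div_log]; field_simp
    have hbudget : (n:ℝ) ≤ 2^7 * Real.logb 2 d * (1+Lb)^2/ε^2 :=
      budget_num d ε Lb Lr M Λ n hd2 hε hε' hLb1 hLr0 hLbLr hlogbd1 hlogd
        hεMub hΛub (Nat.cast_nonneg _) (Nat.cast_nonneg _) hnub (Nat.cast_nonneg _)
    calc (P.card : ℝ) ≤ (n:ℝ) := by exact_mod_cast hcard
      _ ≤ 2^7 * Real.logb 2 d * (1 + Lb)^2/ε^2 := hbudget
  · -- the dispersion property
    intro a b I hab hI hempty
    by_contra hcon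
    push_neg at hcon
    have hvol : ε < ∏ j, (b j - a j) := hcon
    have hL00 : ∀ j, 0 ≤ b j - a j := fun j => by linarith [(hab j).2.1]
    have hL1 : ∀ j, b j - a j ≤ 1 := fun j => by linarith [(hab j).1, (hab j).2.2]
    have hLpos : ∀ j, 0 < b j - a j := by
      intro j
      rcases eq_or_lt_of_le (hL00 j) with h | h
      · exfalso
        have : ∏ j, (b j - a j) = 0 := Finset.prod_eq_zero (Finset.mem_univ j) h.symm
        rw [this] at hvol; linarith
      · exact h
    have hsum1 : ∑ j, (1 - (b j - a j)) ≤ Lr :=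
      sum_one_sub_le ε _ hε hLpos hvol
    set xj : Fin d → ℕ := fun j => ⌊a j * (M:ℝ)⌋₊ with hxj
    set yj : Fin d → ℕ := fun j => M - ⌈b j * (M:ℝ)⌉₊ with hyj
    have hbM : ∀ j, ⌈b j * (M:ℝ)⌉₊ ≤ M := by
      intro j
      apply Nat.ceil_le.mpr
      nlinarith [(hab j).2.2, hMpos]
    have hxle : ∀ j, (xj j : ℝ) ≤ a j * (M:ℝ) := by
      intro j
      apply Nat.floor_le
      have := (hab j).1; positivity
    have hyle : ∀ j, (yj j : ℝ) ≤ (1 - b j) * (M:ℝ) := by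
      intro j
      have h1 : (yj j : ℝ) = (M:ℝ) - (⌈b j * (M:ℝ)⌉₊ : ℝ) := by
        rw [hyj]
        exact_mod_cast Nat.cast_sub (hbM j)
      rw [h1]
      have h2 := Nat.le_ceil (b j * (M:ℝ))
      linarith
    have hxyle : ∀ j, (xj j : ℝ) + (yj j : ℝ) ≤ 2*(1 - (b j - a j))*(M:ℝ) := by
      intro j
      have h1 := hxle j
      have h2 := hyle j
      have h3 : a j ≤ 1 - (b j - a j) := by linarith [(hab j).2.2]
      have h4 : 1 - b j ≤ 1 - (b j - a j) := by linarith [(hab j).1]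
      nlinarith [hMpos]
    have hsumΛ : ∑ j, (xj j + yj j) ≤ Λ := by
      rw [← Nat.cast_le (α := ℝ)]
      push_cast
      calc ∑ j, ((xj j : ℝ) + (yj j : ℝ)) ≤ ∑ j, 2*(1 - (b j - a j))*(M:ℝ) :=
            Finset.sum_le_sum (fun j _ => hxyle j)
        _ = 2*(M:ℝ) * ∑ j, (1 - (b j - a j)) := by
            rw [Finset.mul_sum]; exact Finset.sum_congr rfl fun j _ => by ring
        _ ≤ 2*(M:ℝ)*Lr := by
            apply mul_le_mul_of_nonneg_left hsum1 (by positivity)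
        _ ≤ (Λ:ℝ) := hΛlb
    obtain ⟨c, hc⟩ := exists_code d Λ xj yj hsumΛ
    -- count lower bounds for this code
    have hcnt : ∀ j, (b j - a j) * ((N:ℝ)+1) - 1 ≤ (cntcD d N Λ c j : ℝ) := by
      intro j
      have hfilter : cntcD d N Λ c j = (Finset.univ.filter (fun p : Fin N =>
          xj j ≤ (p:ℕ) ∧ (p:ℕ) + yj j + 1 ≤ N)).card := by
        rw [cntcD, (hc j).1, (hc j).2]
      have hinj : (Finset.Ico (xj j) (N - yj j)).card
          ≤ (Finset.univ.filter (fun p : Fin N =>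
            xj j ≤ (p:ℕ) ∧ (p:ℕ) + yj j + 1 ≤ N)).card := by
        apply Finset.card_le_card_of_injOn (fun m => (⟨m % N, Nat.mod_lt _ hN0⟩ : Fin N))
        · intro m hm
          rw [Finset.mem_coe, Finset.mem_Ico] at hm
          have hmN : m < N := lt_of_lt_of_le hm.2 (Nat.sub_le N _)
          rw [Finset.mem_coe, Finset.mem_filter]
          refine ⟨Finset.mem_univ _, ?_⟩
          simp only [Nat.mod_eq_of_lt hmN]
          omega
        · intro m1 h1 m2 h2 heq
          rw [Finset.coe_Ico, Set.mem_Ico] at h1 h2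
          have hm1 : m1 < N := lt_of_lt_of_le h1.2 (Nat.sub_le N _)
          have hm2 : m2 < N := lt_of_lt_of_le h2.2 (Nat.sub_le N _)
          have := congrArg Fin.val heq
          simpa [Nat.mod_eq_of_lt hm1, Nat.mod_eq_of_lt hm2] using this
      have hcardIco : (Finset.Ico (xj j) (N - yj j)).card = (N - yj j) - xj j :=
        Nat.card_Ico _ _
      have hlow : (b j - a j) * ((N:ℝ)+1) - 1 ≤ (N:ℝ) - (xj j : ℝ) - (yj j : ℝ) := by
        have h1 := hxle j
        have h2 := hyle j
        rw [← hMreal]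
        nlinarith
      rcases le_or_gt (xj j + yj j) N with hle | hgt
      · have hcast : (((N - yj j) - xj j : ℕ) : ℝ) = (N:ℝ) - (xj j:ℝ) - (yj j:ℝ) := by
          have h1 : yj j ≤ N := by omega
          have h2 : xj j ≤ N - yj j := by omega
          push_cast [Nat.cast_sub h2, Nat.cast_sub h1]
          ring
        have h3 : (N - yj j) - xj j ≤ cntcD d N Λ c j := by
          rw [hfilter, ← hcardIco]; exact hinj
        have h3' : (((N - yj j) - xj j : ℕ) : ℝ) ≤ (cntcD d N Λ c j : ℝ) := by
          exact_mod_cast h3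
        rw [hcast] at h3'
        linarith
      · have h4 : (N:ℝ) - (xj j:ℝ) - (yj j:ℝ) < 0 := by
          have : (N:ℝ) < (xj j:ℝ) + (yj j:ℝ) := by exact_mod_cast hgt
          linarith
        have h5 : (0:ℝ) ≤ (cntcD d N Λ c j : ℝ) := Nat.cast_nonneg _
        linarith
    -- validity of the code
    have hvalid : c ∈ codes := by
      rw [hcodes, Finset.mem_filter]
      refine ⟨Finset.mem_univ _, ?_⟩
      exact core_validity d N ε hε (by linarith) (fun j => b j - a j) (cntcD d N Λ c)
        hL1 hL00 hvol hcnt hLb1 hN8 hN4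
    obtain ⟨i, hi⟩ := hω c hvalid
    -- derive a contradiction with emptiness
    have hpt : (fun j => (((ω i j : ℕ) : ℝ) + 1)/(M:ℝ)) ∈ P := by
      rw [hP]
      exact Finset.mem_image_of_mem _ (Finset.mem_univ i)
    obtain ⟨j, hj⟩ := hempty _ hpt
    apply hj
    apply (hI j).1
    rw [HitD] at hi
    have hij := (Fintype.mem_piFinset.mp hi) j
    rw [Finset.mem_filter, (hc j).1, (hc j).2] at hij
    obtain ⟨-, h1, h2⟩ := hij
    constructor
    · rw [lt_div_iff₀ hMpos]
      have h3 : a j * (M:ℝ) < (xj j : ℝ) + 1 := Nat.lt_floor_add_one _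
      have h4 : (xj j : ℝ) ≤ ((ω i j : ℕ) : ℝ) := by exact_mod_cast h1
      linarith
    · rw [div_lt_iff₀ hMpos]
      have h5 : (ω i j : ℕ) + 2 ≤ ⌈b j * (M:ℝ)⌉₊ := by
        have hy : yj j = M - ⌈b j * (M:ℝ)⌉₊ := by rw [hyj]
        have hM' : M = N + 1 := hMdef
        have := hbM j
        omega
      have h6 : (⌈b j * (M:ℝ)⌉₊ : ℝ) < b j * (M:ℝ) + 1 := by
        apply Nat.ceil_lt_add_one
        have := (hab j).2.1
        have := (hab j).1
        nlinarith [hMpos]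
      have h7 : ((ω i j : ℕ) : ℝ) + 2 ≤ (⌈b j * (M:ℝ)⌉₊ : ℝ) := by exact_mod_cast h5
      linarith
end

section
/- Let A(m,d) be a (d, k, k²)-splitter and let T(m) ⊆ {0,...,b-1}^{k²} be a solution of the k-restriction problem with restriction collection C in dimension k². Then T* = {τ ∘ a : τ ∈ T(m), a ∈ A(m,d)} ⊆ {0,...,b-1}^d is a solution of the k-restriction problem with the same (permutation-invariant) restriction collection C in dimension d, and #T* ≤ #T(m) · #A(m,d). -/
/-- The restriction of `x` to the index set `S` (of cardinality `k`), read as a vector of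
length `k` via the increasing enumeration of `S`. -/
def restrict {α : Type*} {n k : ℕ} (x : Fin n → α) (S : Finset (Fin n)) (h : S.card = k) :
    Fin k → α :=
  fun i => x (S.orderIsoOfFin h i).1

/-- Composing a solution `T` of a `k`-restriction problem (with a permutation-invariant
collection `𝒞`) in dimension `k²` with a `(d,k,k²)`-splitter `A` yields a solution
`T* = {τ ∘ a}` of the same `k`-restriction problem in dimension `d`, with
`#T* ≤ #T · #A`. -/
theorem stmt_18 (b k d : ℕ) (hb : 2 ≤ b) (hk : 1 ≤ k) (hkd : k ≤ d)
    (𝒞 : Set (Finset (Fin k → Fin b)))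
    (hCinv : ∀ C ∈ 𝒞, ∀ σ : Equiv.Perm (Fin k),
      C.image (fun v => v ∘ σ) ∈ 𝒞)
    (A : Finset (Fin d → Fin (k ^ 2)))
    (hA : ∀ S : Finset (Fin d), S.card = k → ∃ a ∈ A, Set.InjOn a S)
    (T : Finset (Fin (k ^ 2) → Fin b))
    (hT : ∀ S' : Finset (Fin (k ^ 2)), ∀ hS' : S'.card = k, ∀ C ∈ 𝒞,
      ∃ τ ∈ T, restrict τ S' hS' ∈ C) :
    (∀ S : Finset (Fin d), ∀ hS : S.card = k, ∀ C ∈ 𝒞,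
        ∃ x ∈ (T ×ˢ A).image (fun τa => τa.1 ∘ τa.2), restrict x S hS ∈ C) ∧
      ((T ×ˢ A).image (fun τa : (Fin (k ^ 2) → Fin b) × (Fin d → Fin (k ^ 2)) =>
        τa.1 ∘ τa.2)).card ≤ T.card * A.card := by
  constructor
  · intro S hS C hC
    obtain ⟨a, haA, hainj⟩ := hA S hS
    set S' : Finset (Fin (k ^ 2)) := S.image a with hS'def
    have hS' : S'.card = k := by
      rw [hS'def, Finset.card_image_of_injOn hainj, hS]
    let f : {x // x ∈ S} → {x // x ∈ S'} := fun x => ⟨a x, Finset.mem_image_of_mem a x.2⟩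
    have hfinj : Function.Injective f := by
      intro x y hxy
      exact Subtype.ext (hainj x.2 y.2 (congrArg Subtype.val hxy))
    have hfbij : Function.Bijective f :=
      (Fintype.bijective_iff_injective_and_card f).2
        ⟨hfinj, by simp [Fintype.card_coe, hS, hS']⟩
    let e : {x // x ∈ S} ≃ {x // x ∈ S'} := Equiv.ofBijective f hfbij
    let σ : Equiv.Perm (Fin k) :=
      ((S.orderIsoOfFin hS).toEquiv.trans e).trans (S'.orderIsoOfFin hS').toEquiv.symm
    obtain ⟨τ, hτT, hτC⟩ := hT S' hS' (C.image (fun v => v ∘ σ.symm)) (hCinv C hC σ.symm)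
    refine ⟨τ ∘ a, Finset.mem_image.2 ⟨(τ, a), Finset.mem_product.2 ⟨hτT, haA⟩, rfl⟩, ?_⟩
    obtain ⟨w, hwC, hw⟩ := Finset.mem_image.1 hτC
    have key : restrict (τ ∘ a) S hS = restrict τ S' hS' ∘ σ := by
      funext i
      simp [restrict, σ, e, f, Equiv.ofBijective]
    have : restrict (τ ∘ a) S hS = w := by
      rw [key, ← hw]
      funext i
      simp
    rwa [this]
  · exact le_trans Finset.card_image_le (le_of_eq (Finset.card_product T A))
end

section
/- Fix m ≥ 2 and d ≥ 2^m, and let C be the collection of sets C_m(s,p) = C_m(s,p)' - 1 where C_m(s,p)' = 2^m·(B_m(s,p) ∩ M_m^d) for pairs (s,p) ∈ I_m with s_j = 2^m - 1 for all j > A_m. Then: (i) C is invariant under permutations of the first A_m coordinates it depends on, (ii) #C ≤ 2^{2m·A_m}, and (iii) every C ∈ C satisfies #C ≥ 2^{-m-4}·(2^m - 1)^{A_m}. -/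
set_option maxHeartbeats 1000000



lemma nat_16m4 : ∀ m : ℕ, 4 ≤ m → 16 * m ^ 4 ≤ 2 ^ (3 * m) := by
  intro m hm
  induction m with
  | zero => omega
  | succ k ih =>
    rcases Nat.lt_or_ge k 4 with hk | hk
    · interval_cases k <;> first | omega | norm_num
    · have h1 := ih (by omega)
      have a1 : 4 * k ^ 3 ≤ k ^ 4 := by
        calc 4 * k ^ 3 ≤ k * k ^ 3 := Nat.mul_le_mul_right _ hk
        _ = k ^ 4 := by ring
      have a16 : 16 ≤ k ^ 2 := by nlinarith
      have a2 : 6 * k ^ 2 ≤ k ^ 4 := by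
        calc 6 * k ^ 2 ≤ k ^ 2 * k ^ 2 := Nat.mul_le_mul_right _ (by omega)
        _ = k ^ 4 := by ring
      have a3 : 4 * k ≤ k ^ 4 := by
        calc 4 * k ≤ k ^ 3 * k := Nat.mul_le_mul_right _ (by nlinarith)
        _ = k ^ 4 := by ring
      have a4 : 1 ≤ k ^ 4 := Nat.one_le_pow _ _ (by omega)
      have h2 : (k + 1) ^ 4 ≤ 8 * k ^ 4 := by nlinarith
      have h3 : 2 ^ (3 * (k + 1)) = 8 * 2 ^ (3 * k) := by ring
      nlinarith

/-- Key single-coordinate inequality. -/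
lemma star (m : ℕ) (hm : 2 ≤ m) (s : ℕ) (hs1 : 1 ≤ s) (hs2 : s ≤ 2 ^ m - 1) :
    ((s : ℝ) + 1) ^ (m + 4) * ((2 : ℝ) ^ m - 1) ^ m ≤ (s : ℝ) ^ m * (2 : ℝ) ^ (m * (m + 4)) := by
  set N : ℝ := (2 : ℝ) ^ m with hN
  have hN4 : (4 : ℝ) ≤ N := by
    calc (4:ℝ) = 2 ^ 2 := by norm_num
    _ ≤ 2 ^ m := by exact pow_le_pow_right₀ (by norm_num) hm
  have hNpos : (0 : ℝ) < N := by positivity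
  have hS1 : (1 : ℝ) ≤ (s : ℝ) := by exact_mod_cast hs1
  have hSN : (s : ℝ) ≤ N - 1 := by
    have h2m : (1:ℕ) ≤ 2 ^ m := Nat.one_le_two_pow
    have : (s : ℝ) ≤ ((2 ^ m - 1 : ℕ) : ℝ) := by exact_mod_cast hs2
    rw [Nat.cast_sub h2m] at this
    simpa [hN] using this
  have hpow : (2 : ℝ) ^ (m * (m + 4)) = N ^ m * N ^ 4 := by
    rw [hN, ← pow_mul, ← pow_mul, ← pow_add, Nat.mul_add]
  rw [hpow]
  rcases Nat.lt_or_ge m 4 with hm4 | hm4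
  · -- m = 2 or 3 : finite check
    rw [hN]
    interval_cases m <;> (norm_num at hs2; interval_cases s <;> norm_num)
  · rcases Nat.lt_or_ge s (2 * m) with hsm | hsm
    · -- small s, m ≥ 4 : crude bound
      have hS2m : (s : ℝ) + 1 ≤ 2 * m := by
        have : s + 1 ≤ 2 * m := hsm
        exact_mod_cast this
      have h1 : ((s : ℝ) + 1) ^ (m + 4) ≤ (2 * (s:ℝ)) ^ m * (2 * (m:ℝ)) ^ 4 := by
        rw [pow_add]
        gcongr <;> linarith
      have h2 : ((2:ℝ) ^ m - 1) ^ m ≤ N ^ m := by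
        gcongr
        · linarith
        · simp [hN]
      have h3 : (2:ℝ) ^ m * (16 * (m:ℝ) ^ 4) ≤ N ^ 4 := by
        have := nat_16m4 m hm4
        have hc : (16 * (m:ℝ) ^ 4) ≤ 2 ^ (3 * m) := by exact_mod_cast this
        have he : N ^ 4 = 2 ^ m * 2 ^ (3 * m) := by
          rw [hN, ← pow_mul, ← pow_add]; ring_nf
        rw [he]
        exact mul_le_mul_of_nonneg_left hc (by positivity)
      calc ((s : ℝ) + 1) ^ (m + 4) * ((2:ℝ)^m - 1) ^ m
          ≤ ((2 * (s:ℝ)) ^ m * (2 * (m:ℝ)) ^ 4) * N ^ m := by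
            apply mul_le_mul h1 h2 (pow_nonneg (by linarith) m) (by positivity)
        _ = (s:ℝ) ^ m * N ^ m * (2 ^ m * (16 * (m:ℝ)^4)) := by
            rw [mul_pow]; ring
        _ ≤ (s:ℝ) ^ m * N ^ m * N ^ 4 := by
            apply mul_le_mul_of_nonneg_left h3 (by positivity)
        _ = (s:ℝ) ^ m * (N ^ m * N ^ 4) := by ring
    · -- large s : Bernoulli argument
      have hSm : (2 * m : ℝ) ≤ (s : ℝ) := by exact_mod_cast hsm
      have hm0 : (0:ℝ) ≤ (m:ℝ) := Nat.cast_nonneg m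
      set t : ℝ := N - 1 - (s : ℝ) with ht
      have ht0 : 0 ≤ t := by rw [ht]; linarith
      have htN : t ≤ N := by rw [ht]; linarith
      set u : ℝ := t / ((s : ℝ) * N) with hu
      have hu0 : 0 ≤ u := by positivity
      have hu1 : u ≤ 1 := by
        rw [hu, div_le_one (by positivity)]
        nlinarith
      have hmu : (m : ℝ) * u ≤ 1 / 2 := by
        rw [hu, ← mul_div_assoc, div_le_div_iff₀ (by positivity) (by norm_num)]
        nlinarith [mul_le_mul hSm htN ht0 (by positivity : (0:ℝ) ≤ (s:ℝ))]
      have hb : 1 - (m:ℝ) * u ≤ (1 - u) ^ m := by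
        have := one_add_mul_le_pow (a := -u) (by linarith) m
        simpa [sub_eq_add_neg] using this
      have hone : ((1:ℝ) - u) ^ m * (1 + u) ^ m ≤ 1 := by
        rw [← mul_pow]
        apply pow_le_one₀ (by nlinarith) (by nlinarith)
      have hkey : (1 + u) ^ m ≤ 1 + 2 * (m:ℝ) * u := by
        have hpos : (0:ℝ) < 1 - (m:ℝ) * u := by linarith
        have h1 : (1 - (m:ℝ) * u) * (1 + u) ^ m ≤ 1 := by
          calc (1 - (m:ℝ) * u) * (1 + u) ^ m ≤ (1 - u) ^ m * (1 + u) ^ m :=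
            mul_le_mul_of_nonneg_right hb (by positivity)
          _ ≤ 1 := hone
        have hx0 : 0 ≤ (m:ℝ) * u := by positivity
        have hxx : 0 ≤ ((m:ℝ) * u) * (1 - 2 * ((m:ℝ) * u)) :=
          mul_nonneg hx0 (by linarith)
        have h2 : (1:ℝ) ≤ (1 - (m:ℝ)*u) * (1 + 2 * m * u) := by nlinarith
        exact le_of_mul_le_mul_left (by nlinarith) hpos
      have hfac : ((s:ℝ) + 1) * (N - 1) = (s:ℝ) * N * (1 + u) := by
        rw [hu, ht]
        field_simp
        ring
      have h2mu : 2 * (m:ℝ) * u ≤ t / N := by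
        rw [hu, ← mul_div_assoc, div_le_div_iff₀ (by positivity) (by positivity)]
        nlinarith [mul_le_mul_of_nonneg_right
          (mul_le_mul_of_nonneg_right hSm ht0) (le_of_lt hNpos)]
      have hmain : ((s:ℝ)+1)^m * (N-1)^m * (((s:ℝ)+1)^4) ≤ (s:ℝ)^m * N^m * N^4 := by
        have e1 : ((s:ℝ)+1)^m * (N-1)^m = ((s:ℝ)*N)^m * (1+u)^m := by
          rw [← mul_pow, hfac, mul_pow]
        rw [e1]
        have hS1N : ((s:ℝ)+1) = N - t := by rw [ht]; ring
        rw [hS1N]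
        have hNt0 : 0 ≤ N - t := by linarith
        have step2 : (1 + t/N) * (N-t)^4 ≤ N^4 := by
          have e2 : (1 + t/N) = (N + t)/N := by field_simp
          rw [e2, div_mul_eq_mul_div, div_le_iff₀ hNpos]
          have c1 : (N+t)*(N-t)^4 = (N^2 - t^2)*(N-t)^3 := by ring
          have c2 : (N^2 - t^2)*(N-t)^3 ≤ N^2*(N-t)^3 :=
            mul_le_mul_of_nonneg_right (by nlinarith [sq_nonneg t]) (pow_nonneg hNt0 3)
          have c3 : (N-t)^3 ≤ N^3 := pow_le_pow_left₀ hNt0 (by linarith) 3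
          calc (N+t)*(N-t)^4 = (N^2 - t^2)*(N-t)^3 := c1
          _ ≤ N^2*(N-t)^3 := c2
          _ ≤ N^2*N^3 := mul_le_mul_of_nonneg_left c3 (by positivity)
          _ = N^4*N := by ring
        have hup : (1+u)^m ≤ 1 + t/N := le_trans hkey (by linarith)
        calc ((s:ℝ)*N)^m * (1+u)^m * (N-t)^4
            ≤ ((s:ℝ)*N)^m * (1 + t/N) * (N-t)^4 := by
              apply mul_le_mul_of_nonneg_right _ (pow_nonneg hNt0 4)
              exact mul_le_mul_of_nonneg_left hup (by positivity)
        _ = ((s:ℝ)*N)^m * ((1 + t/N) * (N-t)^4) := by ring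
        _ ≤ ((s:ℝ)*N)^m * N^4 := mul_le_mul_of_nonneg_left step2 (by positivity)
        _ = (s:ℝ)^m * N^m * N^4 := by rw [mul_pow]
      calc ((s:ℝ)+1)^(m+4) * ((2:ℝ)^m - 1)^m = ((s:ℝ)+1)^m * (N-1)^m * ((s:ℝ)+1)^4 := by
            rw [pow_add, hN]; ring_nf
      _ ≤ (s:ℝ)^m * N^m * N^4 := hmain
      _ = (s:ℝ)^m * (N^m * N^4) := by ring

/-- The restriction set `C_m(s,p) = 2^m·(B_m(s,p) ∩ M_m^{A_m}) - 1`, living on the first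
`A_m` coordinates: `w ∈ {0,…,2^m-2}^{A_m}` belongs to it iff for every `ℓ` the grid point
`(w_ℓ+1)/2^m ∈ M_m` lies in `[p_ℓ, p_ℓ + (s_ℓ-1)/2^m]`. -/
noncomputable def restrSet (m Am : ℕ) (s : Fin Am → ℕ) (p : Fin Am → ℝ) :
    Finset (Fin Am → Fin (2 ^ m - 1)) :=
  @Finset.filter _
    (fun w => ∀ ℓ, p ℓ ≤ (((w ℓ : ℕ) : ℝ) + 1) / 2 ^ m ∧
      (((w ℓ : ℕ) : ℝ) + 1) / 2 ^ m ≤ p ℓ + ((s ℓ : ℝ) - 1) / 2 ^ m)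
    (Classical.decPred _) Finset.univ

/-- The collection `𝒞` of restriction sets `C_m(s,p)` for `(s,p) ∈ 𝕀_m` with
`s_j = 2^m - 1` for all `j > A_m`. -/
def Coll (m d Am : ℕ) (h : Am ≤ d) : Set (Finset (Fin Am → Fin (2 ^ m - 1))) :=
  {C | ∃ (s : Fin d → ℕ) (p : Fin d → ℝ),
    (∀ ℓ, s ℓ ≤ 2 ^ m - 1) ∧ (∀ ℓ, p ℓ ∈ Mgrid m) ∧
    OmegaNonempty m d s p ∧
    (∀ j : Fin d, Am ≤ (j : ℕ) → s j = 2 ^ m - 1) ∧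
    C = restrSet m Am (fun i => s (Fin.castLE h i)) (fun i => p (Fin.castLE h i))}


lemma restrSet_eq_piFinset (m Am : ℕ) (s : Fin Am → ℕ) (p : Fin Am → ℝ) :
    restrSet m Am s p = Fintype.piFinset (fun i =>
      @Finset.filter _ (fun w : Fin (2 ^ m - 1) => p i ≤ (((w : ℕ) : ℝ) + 1) / 2 ^ m ∧
        (((w : ℕ) : ℝ) + 1) / 2 ^ m ≤ p i + ((s i : ℝ) - 1) / 2 ^ m)
        (Classical.decPred _) Finset.univ) := by
  ext w
  simp [restrSet, Fintype.mem_piFinset, Finset.mem_filter, forall_and]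

lemma card_restrSet (m Am : ℕ) (hm : 2 ≤ m) (s : Fin Am → ℕ) (p : Fin Am → ℝ)
    (j : Fin Am → ℕ) (hp : ∀ i, p i = (j i : ℝ) / 2 ^ m) (hj1 : ∀ i, 1 ≤ j i)
    (hs1 : ∀ i, 1 ≤ s i) (hjs : ∀ i, j i + s i ≤ 2 ^ m) :
    (restrSet m Am s p).card = ∏ i, s i := by
  have h2m : (4:ℕ) ≤ 2 ^ m := by
    calc (4:ℕ) = 2 ^ 2 := by norm_num
    _ ≤ 2 ^ m := Nat.pow_le_pow_right (by norm_num) hm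
  have hNpos : (0:ℝ) < (2:ℝ) ^ m := by positivity
  rw [restrSet_eq_piFinset, Fintype.card_piFinset]
  apply Finset.prod_congr rfl
  intro i _
  have hb1 : j i - 1 < 2 ^ m - 1 := by have := hjs i; have := hj1 i; have := hs1 i; omega
  have hb2 : j i + s i - 2 < 2 ^ m - 1 := by have := hjs i; have := hj1 i; have := hs1 i; omega
  have hIcc : (@Finset.filter _ (fun w : Fin (2 ^ m - 1) => p i ≤ (((w : ℕ) : ℝ) + 1) / 2 ^ m ∧
        (((w : ℕ) : ℝ) + 1) / 2 ^ m ≤ p i + ((s i : ℝ) - 1) / 2 ^ m)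
        (Classical.decPred _) Finset.univ)
      = Finset.Icc (⟨j i - 1, hb1⟩ : Fin (2 ^ m - 1)) ⟨j i + s i - 2, hb2⟩ := by
    ext w
    simp only [Finset.mem_filter, Finset.mem_Icc]
    simp only [Finset.mem_univ, true_and, Fin.le_def]
    constructor
    · rintro ⟨h1, h2⟩
      rw [hp i, div_le_div_iff_of_pos_right hNpos] at h1
      have h1' : j i ≤ (w : ℕ) + 1 := by exact_mod_cast h1
      rw [hp i, ← add_div, div_le_div_iff_of_pos_right hNpos] at h2
      have h2' : ((w : ℕ) : ℝ) + 2 ≤ (j i : ℝ) + (s i : ℝ) := by linarith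
      have h2'' : (w : ℕ) + 2 ≤ j i + s i := by exact_mod_cast h2'
      exact ⟨by omega, by omega⟩
    · rintro ⟨h1, h2⟩
      have hj := hj1 i
      have hs := hs1 i
      have hw1 : j i - 1 ≤ (w : ℕ) := h1
      have hw2 : (w : ℕ) ≤ j i + s i - 2 := h2
      have h1' : j i ≤ (w : ℕ) + 1 := by omega
      have h2' : (w : ℕ) + 2 ≤ j i + s i := by omega
      constructor
      · rw [hp i, div_le_div_iff_of_pos_right hNpos]
        exact_mod_cast h1'
      · rw [hp i, ← add_div, div_le_div_iff_of_pos_right hNpos]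
        have : ((w : ℕ) : ℝ) + 2 ≤ (j i : ℝ) + (s i : ℝ) := by exact_mod_cast h2'
        linarith
  rw [hIcc, Fin.card_Icc]
  show j i + s i - 2 + 1 - (j i - 1) = s i
  have := hj1 i; have := hs1 i
  omega

lemma image_restrSet (m Am : ℕ) (s : Fin Am → ℕ) (p : Fin Am → ℝ) (σ : Equiv.Perm (Fin Am)) :
    (restrSet m Am s p).image (fun w => w ∘ σ) = restrSet m Am (s ∘ σ) (p ∘ σ) := by
  ext v
  simp only [restrSet, Finset.mem_image, Finset.mem_filter, Finset.mem_univ, true_and,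
    Function.comp_apply]
  constructor
  · rintro ⟨w, hw, rfl⟩
    intro ℓ
    exact hw (σ ℓ)
  · intro hv
    refine ⟨v ∘ σ.symm, fun ℓ => ?_, ?_⟩
    · have := hv (σ.symm ℓ)
      simpa [Function.comp_apply] using this
    · funext ℓ
      simp [Function.comp_apply]

/-- For `m ≥ 2` and `d ≥ 2^m`, with `A_m = min(m·2^m, d)`, the collection `𝒞`:
(i) is invariant under permutations of the `A_m` coordinates,
(ii) has cardinality at most `2^{2m·A_m}`, and
(iii) each of its members `C` satisfies `#C ≥ 2^{-m-4}·(2^m-1)^{A_m}`. -/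

theorem stmt_19 (m d Am : ℕ) (hm : 2 ≤ m) (hd : 2 ^ m ≤ d)
    (hAm : Am = min (m * 2 ^ m) d) (h : Am ≤ d) :
    (∀ C ∈ Coll m d Am h, ∀ σ : Equiv.Perm (Fin Am),
        C.image (fun w => w ∘ σ) ∈ Coll m d Am h) ∧
      Set.ncard (Coll m d Am h) ≤ 2 ^ (2 * m * Am) ∧
      ∀ C ∈ Coll m d Am h,
        ((2 : ℝ) ^ (m + 4))⁻¹ * ((2 : ℝ) ^ m - 1) ^ Am ≤ (C.card : ℝ) := by
  have h2m4 : (4:ℕ) ≤ 2 ^ m := by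
    calc (4:ℕ) = 2 ^ 2 := by norm_num
    _ ≤ 2 ^ m := Nat.pow_le_pow_right (by norm_num) hm
  have hNpos : (0:ℝ) < (2:ℝ) ^ m := by positivity
  have hN4 : (4:ℝ) ≤ (2:ℝ) ^ m := by
    have : ((4:ℕ):ℝ) ≤ ((2^m : ℕ):ℝ) := by exact_mod_cast h2m4
    push_cast at this; linarith
  refine ⟨?_, ?_, ?_⟩
  · -- (i) permutation invariance
    rintro C ⟨s, p, hs, hp, hΩ, hfull, hCeq⟩ σ
    let f : Fin Am ≃ {j : Fin d // (j : ℕ) < Am} :=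
      { toFun := fun i => ⟨Fin.castLE h i, i.isLt⟩
        invFun := fun j => ⟨(j : Fin d), j.2⟩
        left_inv := fun i => rfl
        right_inv := fun j => rfl }
    let τ : Equiv.Perm (Fin d) := σ.extendDomain f
    have hτ : ∀ i : Fin Am, τ (Fin.castLE h i) = Fin.castLE h (σ i) := fun i =>
      Equiv.Perm.extendDomain_apply_image σ f i
    have hτ' : ∀ ℓ : Fin d, Am ≤ (ℓ : ℕ) → τ ℓ = ℓ := fun ℓ hℓ =>
      Equiv.Perm.extendDomain_apply_not_subtype σ f (by omega)
    refine ⟨s ∘ τ, p ∘ τ, fun ℓ => hs _, fun ℓ => hp _, ?_, ?_, ?_⟩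
    · obtain ⟨a, b, hab, hprod, hcond⟩ := hΩ
      refine ⟨a ∘ τ, b ∘ τ, fun ℓ => hab _, ?_, fun ℓ => hcond _⟩
      calc ((2:ℝ)^m)⁻¹ < ∏ ℓ, (b ℓ - a ℓ) := hprod
      _ = ∏ ℓ, (b (τ ℓ) - a (τ ℓ)) := (Equiv.prod_comp τ (fun ℓ => b ℓ - a ℓ)).symm
      _ = ∏ ℓ, ((b ∘ τ) ℓ - (a ∘ τ) ℓ) := rfl
    · intro jj hjj
      show s (τ jj) = 2 ^ m - 1
      rw [hτ' jj hjj]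
      exact hfull jj hjj
    · rw [hCeq, image_restrSet]
      congr 1
      · funext i
        show s (Fin.castLE h (σ i)) = s (τ (Fin.castLE h i))
        rw [hτ i]
      · funext i
        show p (Fin.castLE h (σ i)) = p (τ (Fin.castLE h i))
        rw [hτ i]
  · -- (ii) cardinality bound
    classical
    set g : (Fin Am → Fin (2 ^ m)) × (Fin Am → Fin (2 ^ m)) → Finset (Fin Am → Fin (2 ^ m - 1)) :=
      fun tu => restrSet m Am (fun i => (tu.1 i : ℕ)) (fun i => ((tu.2 i : ℕ) : ℝ) / 2 ^ m)
      with hg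
    have hsub : Coll m d Am h ⊆ g '' Set.univ := by
      rintro C ⟨s, p, hs, hp, hΩ, hfull, hCeq⟩
      choose jf hj1 hj2 hj3 using hp
      have hlt : ∀ ℓ, jf ℓ < 2 ^ m := fun ℓ => by have := hj2 ℓ; omega
      have hslt : ∀ ℓ, s ℓ < 2 ^ m := fun ℓ => by have := hs ℓ; omega
      refine ⟨(fun i => ⟨s (Fin.castLE h i), hslt _⟩, fun i => ⟨jf (Fin.castLE h i), hlt _⟩),
        Set.mem_univ _, ?_⟩
      rw [hCeq]
      show restrSet m Am (fun i => s (Fin.castLE h i))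
          (fun i => ((jf (Fin.castLE h i) : ℕ) : ℝ) / 2 ^ m) = _
      congr 1
      funext i
      exact (hj3 (Fin.castLE h i)).symm
    calc Set.ncard (Coll m d Am h) ≤ Set.ncard (g '' Set.univ) :=
          Set.ncard_le_ncard hsub (Set.toFinite _)
    _ ≤ Set.ncard (Set.univ : Set ((Fin Am → Fin (2 ^ m)) × (Fin Am → Fin (2 ^ m)))) :=
          Set.ncard_image_le (Set.toFinite _)
    _ = Fintype.card ((Fin Am → Fin (2 ^ m)) × (Fin Am → Fin (2 ^ m))) := by
          rw [Set.ncard_univ, Nat.card_eq_fintype_card]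
    _ = 2 ^ (2 * m * Am) := by
          rw [Fintype.card_prod, Fintype.card_fun]
          simp only [Fintype.card_fin]
          rw [← pow_mul, ← pow_add]
          congr 1
          ring
  · -- (iii) lower bound on cardinality
    rintro C ⟨s, p, hs, hp, hΩ, hfull, hCeq⟩
    obtain ⟨a, b, hab, hprod, hcond⟩ := hΩ
    have hAm1 : 1 ≤ Am := by
      have h1 : 1 ≤ m * 2 ^ m := by
        have : 0 < m * 2 ^ m := by positivity
        omega
      have h2 : 1 ≤ d := by omega
      omega
    obtain ⟨k, hk⟩ : ∃ k, Am = k + 1 := ⟨Am - 1, by omega⟩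
    -- basic per-coordinate facts
    have hpos : ∀ ℓ, 0 < b ℓ - a ℓ := fun ℓ =>
      lt_of_le_of_lt (by positivity) (hcond ℓ).1
    have hle1 : ∀ ℓ, b ℓ - a ℓ ≤ 1 := fun ℓ => by
      obtain ⟨h1, h2, h3⟩ := hab ℓ; linarith
    have hsingle : ∀ ℓ₀, ((2:ℝ)^m)⁻¹ < b ℓ₀ - a ℓ₀ := by
      intro ℓ₀
      have he := Finset.mul_prod_erase Finset.univ (fun ℓ => b ℓ - a ℓ) (Finset.mem_univ ℓ₀)
      have hrest : ∏ ℓ ∈ Finset.univ.erase ℓ₀, (b ℓ - a ℓ) ≤ 1 :=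
        Finset.prod_le_one (fun ℓ _ => (hpos ℓ).le) (fun ℓ _ => hle1 ℓ)
      calc ((2:ℝ)^m)⁻¹ < ∏ ℓ, (b ℓ - a ℓ) := hprod
      _ = (b ℓ₀ - a ℓ₀) * ∏ ℓ ∈ Finset.univ.erase ℓ₀, (b ℓ - a ℓ) := he.symm
      _ ≤ (b ℓ₀ - a ℓ₀) * 1 := mul_le_mul_of_nonneg_left hrest (hpos ℓ₀).le
      _ = b ℓ₀ - a ℓ₀ := mul_one _
    have hs1 : ∀ ℓ, 1 ≤ s ℓ := by
      intro ℓ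
      by_contra hcon
      have hz : s ℓ = 0 := by omega
      have h1 := (hcond ℓ).2.1
      rw [hz] at h1
      simp only [Nat.cast_zero, zero_add, one_div] at h1
      linarith [hsingle ℓ]
    choose jf hj1 hj2 hj3 using hp
    have hjs : ∀ ℓ, jf ℓ + s ℓ ≤ 2 ^ m := by
      intro ℓ
      have c1 := (hcond ℓ).1
      have c2 := (hcond ℓ).2.2.1
      have c3 := (hab ℓ).2.2
      have c4 := (hab ℓ).2.1
      have hpl := hj3 ℓ
      have hfrac : ((s ℓ : ℝ) + (jf ℓ : ℝ) - 1) / 2 ^ m < 1 := by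
        rw [sub_div, add_div]
        have hinv : (1:ℝ) / 2 ^ m = ((2:ℝ)^m)⁻¹ := one_div _
        rw [hinv]
        have : a ℓ ≥ (jf ℓ : ℝ) / 2 ^ m - ((2:ℝ)^m)⁻¹ := by rw [← hpl]; exact c2
        linarith
      rw [div_lt_one hNpos] at hfrac
      have : ((jf ℓ + s ℓ : ℕ) : ℝ) < (2:ℝ) ^ m + 1 := by push_cast; linarith
      have h2 : ((jf ℓ + s ℓ : ℕ) : ℝ) < ((2 ^ m + 1 : ℕ) : ℝ) := by push_cast; linarith
      have := Nat.cast_lt.mp h2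
      omega
    -- cardinality of C
    have hcard : C.card = ∏ i : Fin Am, s (Fin.castLE h i) := by
      rw [hCeq]
      exact card_restrSet m Am hm _ _ (fun i => jf (Fin.castLE h i))
        (fun i => hj3 _) (fun i => hj1 _) (fun i => hs1 _) (fun i => hjs _)
    -- product lower bound
    have hA : ((2:ℝ)^m)⁻¹ < ∏ ℓ : Fin d, (((s ℓ : ℝ) + 1) / 2 ^ m) :=
      lt_of_lt_of_le hprod
        (Finset.prod_le_prod (fun ℓ _ => (hpos ℓ).le) (fun ℓ _ => (hcond ℓ).2.1))
    have hB2 := Finset.prod_map (Finset.univ : Finset (Fin Am))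
      ⟨Fin.castLE h, Fin.castLE_injective h⟩ (fun ℓ => ((s ℓ : ℝ) + 1) / 2 ^ m)
    simp only [Function.Embedding.coeFn_mk] at hB2
    have hB1 : ∏ x ∈ (Finset.univ : Finset (Fin Am)).map
          ⟨Fin.castLE h, Fin.castLE_injective h⟩, (((s x : ℝ) + 1) / 2 ^ m)
        = ∏ ℓ : Fin d, (((s ℓ : ℝ) + 1) / 2 ^ m) := by
      apply Finset.prod_subset (Finset.subset_univ _)
      intro x _ hx
      have hxAm : Am ≤ (x : ℕ) := by
        by_contra hlt
        push_neg at hlt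
        exact hx (Finset.mem_map.mpr ⟨⟨(x : ℕ), hlt⟩, Finset.mem_univ _, by
          ext; simp [Fin.castLE]⟩)
      rw [hfull x hxAm]
      rw [Nat.cast_sub Nat.one_le_two_pow]
      push_cast
      field_simp
      ring
    have hB : ∏ ℓ : Fin d, (((s ℓ : ℝ) + 1) / 2 ^ m)
        = ∏ i : Fin Am, (((s (Fin.castLE h i) : ℝ) + 1) / 2 ^ m) := by
      rw [← hB1, hB2]
    have hRgt : (2:ℝ) ^ (m * k) < ∏ i : Fin Am, ((s (Fin.castLE h i) : ℝ) + 1) := by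
      rw [hB] at hA
      rw [Finset.prod_div_distrib, Finset.prod_const, Finset.card_univ, Fintype.card_fin] at hA
      rw [lt_div_iff₀ (by positivity)] at hA
      have he : ((2:ℝ)^m)⁻¹ * ((2:ℝ)^m)^Am = (2:ℝ)^(m*k) := by
        rw [hk, pow_succ, ← pow_mul]
        field_simp
      calc (2:ℝ)^(m*k) = ((2:ℝ)^m)⁻¹ * ((2:ℝ)^m)^Am := he.symm
      _ < _ := hA
    -- apply the star inequality
    set Q : ℝ := ∏ i : Fin Am, (s (Fin.castLE h i) : ℝ) with hQ
    set R : ℝ := ∏ i : Fin Am, ((s (Fin.castLE h i) : ℝ) + 1) with hR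
    have hL0 : (0:ℝ) ≤ (2:ℝ)^m - 1 := by linarith
    have hQ0 : (0:ℝ) ≤ Q := Finset.prod_nonneg (fun i _ => by positivity)
    have hprodstar : R ^ (m + 4) * ((2:ℝ)^m - 1) ^ (Am * m)
        ≤ Q ^ m * ((2:ℝ) ^ (m * (m + 4))) ^ Am := by
      have := Finset.prod_le_prod (s := (Finset.univ : Finset (Fin Am)))
        (f := fun i => ((s (Fin.castLE h i) : ℝ) + 1) ^ (m + 4) * ((2:ℝ)^m - 1) ^ m)
        (g := fun i => (s (Fin.castLE h i) : ℝ) ^ m * (2:ℝ) ^ (m * (m + 4)))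
        (fun i _ => mul_nonneg (by positivity) (pow_nonneg hL0 m))
        (fun i _ => star m hm _ (hs1 _) (hs _))
      rw [Finset.prod_mul_distrib, Finset.prod_mul_distrib, Finset.prod_pow,
        Finset.prod_pow, Finset.prod_const, Finset.prod_const, Finset.card_univ,
        Fintype.card_fin, ← pow_mul] at this
      have eQ : ∏ x : Fin Am, (s (Fin.castLE h x) : ℝ) ^ m = Q ^ m :=
        Finset.prod_pow _ _ _
      rw [eQ] at this
      exact this
    have hRpow : ((2:ℝ) ^ (m * k)) ^ (m + 4) ≤ R ^ (m + 4) :=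
      pow_le_pow_left₀ (by positivity) hRgt.le _
    have hstep : (2:ℝ) ^ (m * k * (m + 4)) * ((2:ℝ)^m - 1) ^ (Am * m)
        ≤ (2:ℝ) ^ (m * k * (m + 4)) * (Q ^ m * (2:ℝ) ^ (m * (m + 4))) := by
      have e1 : ((2:ℝ) ^ (m * k)) ^ (m + 4) = (2:ℝ) ^ (m * k * (m + 4)) := by
        rw [← pow_mul]
      have e2 : ((2:ℝ) ^ (m * (m + 4))) ^ Am = (2:ℝ) ^ (m * k * (m + 4)) * (2:ℝ) ^ (m * (m + 4)) := by
        rw [← pow_mul, ← pow_add]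
        congr 1
        rw [hk]; ring
      calc (2:ℝ) ^ (m * k * (m + 4)) * ((2:ℝ)^m - 1) ^ (Am * m)
          ≤ R ^ (m + 4) * ((2:ℝ)^m - 1) ^ (Am * m) := by
            apply mul_le_mul_of_nonneg_right _ (pow_nonneg hL0 _)
            rw [← e1]; exact hRpow
      _ ≤ Q ^ m * ((2:ℝ) ^ (m * (m + 4))) ^ Am := hprodstar
      _ = (2:ℝ) ^ (m * k * (m + 4)) * (Q ^ m * (2:ℝ) ^ (m * (m + 4))) := by
            rw [e2]; ring
    have hcancel : ((2:ℝ)^m - 1) ^ (Am * m) ≤ Q ^ m * (2:ℝ) ^ (m * (m + 4)) :=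
      le_of_mul_le_mul_left hstep (by positivity)
    have hfinal : (((2:ℝ)^m - 1) ^ Am) ^ m ≤ (Q * (2:ℝ) ^ (m + 4)) ^ m := by
      rw [mul_pow, ← pow_mul, ← pow_mul]
      calc ((2:ℝ)^m - 1) ^ (Am * m)
          ≤ Q ^ m * (2:ℝ) ^ (m * (m + 4)) := hcancel
      _ = Q ^ m * (2:ℝ) ^ ((m + 4) * m) := by rw [mul_comm (m+4) m]
    have hbase : ((2:ℝ)^m - 1) ^ Am ≤ Q * (2:ℝ) ^ (m + 4) :=
      le_of_pow_le_pow_left₀ (by omega) (by positivity) hfinal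
    rw [hcard]
    have hQcast : ((∏ i : Fin Am, s (Fin.castLE h i) : ℕ) : ℝ) = Q := by
      rw [hQ]; push_cast; rfl
    rw [hQcast]
    rw [inv_mul_le_iff₀ (by positivity)]
    linarith
end
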